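/- arXiv:2503.12518 — 8 statements merged into one kernel-verified Lean document; each statement's English description precedes it below -/
import Mathlib

section
/- For every two discrete probability distributions μ and τ over a finite set Ω, there exists a permutation π of Ω such that the total variation distance between μ and the pushforward of τ under π is at most 2·D_H(μ;τ), where D_H is the histogram divergence. -/
open Finset

/-- For every two distributions μ, τ on a finite set Ω, there is a permutation π with
    d_TV(μ, πτ) ≤ 2·D_H(μ;τ).  Since D_H is the least ε admitting a witnessing
    permutation, we state: for every ε ≥ 0 witnessed by some permutation π
    (i.e. Pr_{x∼μ}[μ(x) ∉ (1±ε)τ(π(x))] ≤ ε), some permutation σ has d_TV ≤ 2ε. -/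
theorem dtv_permutation_le_twice_dhist {Ω : Type*} [Fintype Ω] [DecidableEq Ω]
    (μ τ : Ω → ℝ)
    (hμ0 : ∀ x, 0 ≤ μ x) (hμ1 : ∑ x, μ x = 1)
    (hτ0 : ∀ x, 0 ≤ τ x) (hτ1 : ∑ x, τ x = 1)
    (ε : ℝ) (hε : 0 ≤ ε)
    (π : Equiv.Perm Ω)
    (hπ : ∑ x ∈ Finset.univ.filter
        (fun x => ¬ ((1 - ε) * τ (π x) ≤ μ x ∧ μ x ≤ (1 + ε) * τ (π x))), μ x ≤ ε) :
    ∃ σ : Equiv.Perm Ω, (1/2) * ∑ x, |μ x - τ (σ x)| ≤ 2 * ε := by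
  refine ⟨π, ?_⟩
  have hτπ : ∑ x, τ (π x) = 1 := by rw [Equiv.sum_comp π τ]; exact hτ1
  have hdiff : ∑ x, (μ x - τ (π x)) = 0 := by
    rw [Finset.sum_sub_distrib, hμ1, hτπ]; ring
  have habs : ∀ d : ℝ, |d| = 2 * max d 0 - d := by
    intro d
    rcases le_total d 0 with h | h
    · rw [abs_of_nonpos h, max_eq_right h]; ring
    · rw [abs_of_nonneg h, max_eq_left h]; ring
  have hkey : ∑ x, |μ x - τ (π x)| = 2 * ∑ x, max (μ x - τ (π x)) 0 := by
    simp_rw [habs]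
    rw [Finset.sum_sub_distrib, hdiff, Finset.mul_sum]
    ring
  rw [hkey]
  have hmaxle : ∑ x, max (μ x - τ (π x)) 0 ≤ 2 * ε := by
    classical
    set p : Ω → Prop := fun x => (1 - ε) * τ (π x) ≤ μ x ∧ μ x ≤ (1 + ε) * τ (π x) with hp
    rw [← Finset.sum_filter_add_sum_filter_not Finset.univ p]
    have h1 : ∑ x ∈ Finset.univ.filter p, max (μ x - τ (π x)) 0 ≤ ε := by
      calc ∑ x ∈ Finset.univ.filter p, max (μ x - τ (π x)) 0
          ≤ ∑ x ∈ Finset.univ.filter p, ε * τ (π x) := by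
            apply Finset.sum_le_sum
            intro x hx
            rw [Finset.mem_filter] at hx
            have h2 := hx.2.2
            have := hτ0 (π x)
            apply max_le <;> nlinarith
        _ ≤ ∑ x, ε * τ (π x) := by
            apply Finset.sum_le_sum_of_subset_of_nonneg (Finset.filter_subset _ _)
            intro x _ _
            exact mul_nonneg hε (hτ0 _)
        _ = ε := by rw [← Finset.mul_sum, hτπ, mul_one]
    have h2 : ∑ x ∈ Finset.univ.filter (fun x => ¬ p x), max (μ x - τ (π x)) 0 ≤ ε := by
      calc ∑ x ∈ Finset.univ.filter (fun x => ¬ p x), max (μ x - τ (π x)) 0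
          ≤ ∑ x ∈ Finset.univ.filter (fun x => ¬ p x), μ x := by
            apply Finset.sum_le_sum
            intro x _
            have := hτ0 (π x)
            have := hμ0 x
            apply max_le <;> linarith
        _ ≤ ε := hπ
    linarith
  linarith
end

section
/- Let r, r₁, r₂ > 0 with r > r₁ + r₂. Let X₁,…,X_k be i.i.d. non-negative random variables with average X̄ = (1/k)∑X_i, and let Y₁,…,Y_k be random variables satisfying |Y_i| ≤ max{r₁·E[X̄], r₂·X_i} for every i. Then Pr[(1/k)∑(X_i+Y_i) ∉ (1±r)·E[X̄]] ≤ Pr[X̄ ∉ (1±r')·E[X̄]], where r' = (r − r₁ − r₂)/(1 + r₂). -/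
open MeasureTheory ProbabilityTheory Finset

/-- Error-propagation bound: if X₁,…,X_k are i.i.d. non-negative,
    |Y_i| ≤ max{r₁ E[X̄], r₂ X_i}, and r > r₁ + r₂, then
    Pr[(1/k)∑(X_i+Y_i) ∉ (1±r)E[X̄]] ≤ Pr[X̄ ∉ (1±r')E[X̄]] with
    r' = (r − r₁ − r₂)/(1 + r₂). -/
theorem affine_error_propagation {Θ : Type*} [MeasurableSpace Θ]
    (P : Measure Θ) [IsProbabilityMeasure P]
    (k : ℕ) (hk : 0 < k) (X Y : Fin k → Θ → ℝ)
    (hmeas : ∀ i, Measurable (X i))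
    (hindep : iIndepFun X P)
    (hident : ∀ i j, IdentDistrib (X i) (X j) P P)
    (hX0 : ∀ i ω, 0 ≤ X i ω)
    (r r₁ r₂ : ℝ) (hr₁ : 0 < r₁) (hr₂ : 0 < r₂) (hr : r₁ + r₂ < r)
    (m : ℝ) (hm : m = ∫ ω, (∑ i, X i ω) / k ∂P)
    (hY : ∀ i ω, |Y i ω| ≤ max (r₁ * m) (r₂ * X i ω)) :
    P {ω | (∑ i, (X i ω + Y i ω)) / k ∉ Set.Icc ((1 - r) * m) ((1 + r) * m)}
      ≤ P {ω | (∑ i, X i ω) / k ∉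
          Set.Icc ((1 - (r - r₁ - r₂) / (1 + r₂)) * m)
                  ((1 + (r - r₁ - r₂) / (1 + r₂)) * m)} := by
  have hkR : (0:ℝ) < k := by exact_mod_cast hk
  have hm0 : 0 ≤ m := by
    rw [hm]
    exact integral_nonneg fun ω =>
      div_nonneg (Finset.sum_nonneg fun i _ => hX0 i ω) (Nat.cast_nonneg k)
  set r' : ℝ := (r - r₁ - r₂) / (1 + r₂) with hr'def
  have hr'0 : 0 ≤ r' := div_nonneg (by linarith) (by linarith)
  refine measure_mono fun ω hω => ?_
  simp only [Set.mem_setOf_eq, Set.mem_Icc] at hω ⊢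
  intro hA
  obtain ⟨h1, h2⟩ := hA
  apply hω
  set A : ℝ := (∑ i, X i ω) / k with hAdef
  have hsum : (∑ i, (X i ω + Y i ω)) / k = A + (∑ i, Y i ω) / k := by
    rw [Finset.sum_add_distrib, add_div]
  have hT : |(∑ i, Y i ω) / k| ≤ r₁ * m + r₂ * A := by
    have h1 : |∑ i, Y i ω| ≤ ∑ i, (r₁ * m + r₂ * X i ω) := by
      refine (Finset.abs_sum_le_sum_abs _ _).trans (Finset.sum_le_sum fun i _ => ?_)
      exact (hY i ω).trans (max_le (by nlinarith [hX0 i ω]) (by nlinarith))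
    have h2 : ∑ i, (r₁ * m + r₂ * X i ω) = k * (r₁ * m) + r₂ * ∑ i, X i ω := by
      rw [Finset.sum_add_distrib, Finset.sum_const, Finset.card_fin, ← Finset.mul_sum,
        nsmul_eq_mul]
    rw [abs_div, abs_of_pos hkR, div_le_iff₀ hkR, hAdef]
    rw [h2] at h1
    calc |∑ i, Y i ω| ≤ ↑k * (r₁ * m) + r₂ * ∑ i, X i ω := h1
      _ = (r₁ * m + r₂ * ((∑ i, X i ω) / ↑k)) * ↑k := by field_simp
  rw [hsum]
  rw [abs_le] at hT
  have hr'eq : r' * (1 + r₂) = r - r₁ - r₂ := by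
    rw [hr'def, div_mul_cancel₀]; linarith
  constructor
  · nlinarith [mul_nonneg hr'0 hm0, mul_nonneg (mul_nonneg hr'0 hr₂.le) hm0]
  · nlinarith [mul_nonneg hr'0 hm0, mul_nonneg (mul_nonneg hr'0 hr₂.le) hm0]
end

section
/- Consider the integer random walk X₁ = k, and at each step i a bit B_i ∈ {0,1} is chosen with Pr[B_i = 1 | history] ≥ 1 − 3/100; if B_i = 1 then X_{i+1} = max{0, X_i − 1}, and if B_i = 0 then X_{i+1} is any integer with 0 ≤ X_{i+1} ≤ X_i + 1. If n ≥ 20k + 1, then Pr[X_n = 0] ≥ 2/3. -/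
open MeasureTheory
open scoped ENNReal

section LRWAux

variable {Θ : Type*} [MeasurableSpace Θ]

lemma lrw_aux_step (P : Measure Θ) [IsProbabilityMeasure P] (B : ℕ → Θ → Bool)
    (hmB : ∀ i, Measurable (B i))
    (hcond : ∀ i, 1 ≤ i → ∀ h : ℕ → Bool,
      (97/100 : ℝ≥0∞) * P {ω | ∀ j, 1 ≤ j → j < i → B j ω = h j}
        ≤ P ({ω | B i ω = true} ∩ {ω | ∀ j, 1 ≤ j → j < i → B j ω = h j}))
    (i : ℕ) (hi : 1 ≤ i) (S : Finset ℕ) (hS : ∀ j ∈ S, 1 ≤ j ∧ j < i) :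
    P ({ω | B i ω = false} ∩ {ω | ∀ j ∈ S, B j ω = false})
      ≤ (3/100 : ℝ≥0∞) * P {ω | ∀ j ∈ S, B j ω = false} := by
  classical
  set hv : (Fin i → Bool) → ℕ → Bool :=
    fun v j => if h : j < i then v ⟨j, h⟩ else false with hhv
  set C : (Fin i → Bool) → Set Θ :=
    fun v => {ω | ∀ j, 1 ≤ j → j < i → B j ω = hv v j} with hC
  have hmC : ∀ v, MeasurableSet (C v) := by
    intro v
    have : C v = ⋂ j, ⋂ (_ : 1 ≤ j), ⋂ (_ : j < i), {ω | B j ω = hv v j} := by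
      ext ω; simp [hC, Set.mem_iInter]
    rw [this]
    exact MeasurableSet.iInter fun j => MeasurableSet.iInter fun _ =>
      MeasurableSet.iInter fun _ => (hmB j) (MeasurableSet.singleton _)
  -- per-cylinder bound
  have hcyl : ∀ v, P ({ω | B i ω = false} ∩ C v) ≤ (3/100) * P (C v) := by
    intro v
    have hcd := hcond i hi (hv v)
    have hsplit : P ({ω | B i ω = true} ∩ C v) + P ({ω | B i ω = false} ∩ C v) = P (C v) := by
      have h1 : C v ∩ {ω | B i ω = true} = {ω | B i ω = true} ∩ C v := Set.inter_comm _ _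
      have h2 : C v \ {ω | B i ω = true} = {ω | B i ω = false} ∩ C v := by
        ext ω; simp [Set.mem_diff, Set.mem_inter_iff, and_comm, Bool.not_eq_true]
      rw [← h1, ← h2]
      exact measure_inter_add_diff _ ((hmB i) (MeasurableSet.singleton _))
    have key : (97/100 : ℝ≥0∞) * P (C v) + P ({ω | B i ω = false} ∩ C v)
        ≤ (97/100 : ℝ≥0∞) * P (C v) + (3/100) * P (C v) := by
      have heq : (97/100 : ℝ≥0∞) * P (C v) + (3/100) * P (C v) = P (C v) := by
        rw [← add_mul, show (97/100 + 3/100 : ℝ≥0∞) = 1 by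
          rw [ENNReal.div_add_div_same, show (97+3 : ℝ≥0∞) = 100 by norm_num]
          exact ENNReal.div_self (by norm_num) (by norm_num), one_mul]
      calc (97/100 : ℝ≥0∞) * P (C v) + P ({ω | B i ω = false} ∩ C v)
          ≤ P ({ω | B i ω = true} ∩ C v) + P ({ω | B i ω = false} ∩ C v) :=
            add_le_add_left hcd _
        _ = P (C v) := hsplit
        _ = (97/100 : ℝ≥0∞) * P (C v) + (3/100) * P (C v) := heq.symm
    exact ENNReal.le_of_add_le_add_left
      (by exact ne_of_lt (lt_of_le_of_lt (mul_le_of_le_one_left zero_le (by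
        rw [ENNReal.div_le_iff (by norm_num : (100:ℝ≥0∞) ≠ 0) (by norm_num), one_mul]
        norm_num)) (lt_of_le_of_lt prob_le_one (by norm_num)))) key
  -- decomposition
  set V : Finset (Fin i → Bool) :=
    Finset.univ.filter (fun v => v ⟨0, hi⟩ = false ∧ ∀ j : Fin i, (j : ℕ) ∈ S → v j = false)
    with hV
  have hcover : {ω | ∀ j ∈ S, B j ω = false} = ⋃ v ∈ V, C v := by
    ext ω
    constructor
    · intro hω
      refine Set.mem_iUnion₂.mpr ⟨fun j => if (j : ℕ) = 0 then false else B j ω, ?_, ?_⟩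
      · rw [hV, Finset.mem_filter]
        refine ⟨Finset.mem_univ _, by simp, fun j hj => ?_⟩
        have h1 : 1 ≤ (j : ℕ) := (hS _ hj).1
        simp only [Nat.pos_iff_ne_zero.mp h1, if_neg (Nat.pos_iff_ne_zero.mp h1)]
        exact hω _ hj
      · intro j h1 h2
        simp only [hhv, dif_pos h2]
        have : (j : ℕ) ≠ 0 := by omega
        simp [this]
    · intro hω
      obtain ⟨v, hvV, hωv⟩ := Set.mem_iUnion₂.mp hω
      rw [hV, Finset.mem_filter] at hvV
      intro j hj
      obtain ⟨h1, h2⟩ := hS j hj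
      have := hωv j h1 h2
      rw [this]
      simp only [hhv, dif_pos h2]
      exact hvV.2.2 ⟨j, h2⟩ hj
  have hdisj : (V : Set (Fin i → Bool)).PairwiseDisjoint C := by
    intro v hv' w hw' hvw
    simp only [Finset.coe_filter, Set.mem_setOf_eq, hV, Finset.mem_coe, Finset.mem_filter] at hv' hw'
    refine Set.disjoint_left.mpr fun ω hωv hωw => hvw ?_
    funext j
    by_cases hj0 : (j : ℕ) = 0
    · have : j = ⟨0, hi⟩ := Fin.ext hj0
      rw [this, hv'.2.1, hw'.2.1]
    · have h1 : 1 ≤ (j : ℕ) := Nat.pos_of_ne_zero hj0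
      have e1 := hωv j h1 j.isLt
      have e2 := hωw j h1 j.isLt
      simp only [hhv, dif_pos j.isLt, Fin.eta] at e1 e2
      rw [← e1, ← e2]
  calc P ({ω | B i ω = false} ∩ {ω | ∀ j ∈ S, B j ω = false})
      = P (⋃ v ∈ V, ({ω | B i ω = false} ∩ C v)) := by rw [hcover, Set.inter_iUnion₂]
    _ = ∑ v ∈ V, P ({ω | B i ω = false} ∩ C v) := by
        refine measure_biUnion_finset (hdisj.mono_on fun v _ => Set.inter_subset_right)
          fun v _ => ((hmB i) (MeasurableSet.singleton _)).inter (hmC v)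
    _ ≤ ∑ v ∈ V, (3/100 : ℝ≥0∞) * P (C v) := Finset.sum_le_sum fun v _ => hcyl v
    _ = (3/100 : ℝ≥0∞) * ∑ v ∈ V, P (C v) := by rw [Finset.mul_sum]
    _ = (3/100 : ℝ≥0∞) * P {ω | ∀ j ∈ S, B j ω = false} := by
        rw [hcover, measure_biUnion_finset hdisj fun v _ => hmC v]

lemma lrw_prod (P : Measure Θ) [IsProbabilityMeasure P] (B : ℕ → Θ → Bool)
    (hstep : ∀ i, 1 ≤ i → ∀ S : Finset ℕ, (∀ j ∈ S, 1 ≤ j ∧ j < i) →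
      P ({ω | B i ω = false} ∩ {ω | ∀ j ∈ S, B j ω = false})
        ≤ (3/100 : ℝ≥0∞) * P {ω | ∀ j ∈ S, B j ω = false}) :
    ∀ (m : ℕ) (S : Finset ℕ), (∀ j ∈ S, 1 ≤ j ∧ j ≤ m) →
      P {ω | ∀ j ∈ S, B j ω = false} ≤ (3/100 : ℝ≥0∞) ^ S.card := by
  classical
  intro m
  induction m with
  | zero =>
    intro S hS
    have : S = ∅ := Finset.eq_empty_of_forall_notMem fun j hj => by
      have := hS j hj; omega
    subst this
    simp
  | succ m ih =>
    intro S hS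
    by_cases hmem : (m + 1) ∈ S
    · have hset : {ω | ∀ j ∈ S, B j ω = false}
          = {ω | B (m+1) ω = false} ∩ {ω | ∀ j ∈ S.erase (m+1), B j ω = false} := by
        ext ω
        simp only [Set.mem_setOf_eq, Set.mem_inter_iff]
        constructor
        · exact fun h => ⟨h _ hmem, fun j hj => h j (Finset.mem_of_mem_erase hj)⟩
        · rintro ⟨h1, h2⟩ j hj
          rcases eq_or_ne j (m+1) with rfl | hne
          · exact h1
          · exact h2 j (Finset.mem_erase.mpr ⟨hne, hj⟩)
      have hcard : S.card = (S.erase (m+1)).card + 1 := (Finset.card_erase_add_one hmem).symm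
      rw [hset, hcard, pow_succ]
      calc P ({ω | B (m+1) ω = false} ∩ {ω | ∀ j ∈ S.erase (m+1), B j ω = false})
          ≤ (3/100 : ℝ≥0∞) * P {ω | ∀ j ∈ S.erase (m+1), B j ω = false} := by
            refine hstep (m+1) (by omega) _ fun j hj => ?_
            have h1 := hS j (Finset.mem_of_mem_erase hj)
            have h2 := (Finset.mem_erase.mp hj).1
            omega
        _ ≤ (3/100 : ℝ≥0∞) * (3/100 : ℝ≥0∞) ^ (S.erase (m+1)).card := by
            refine mul_le_mul_right (ih _ fun j hj => ?_) _
            have h1 := hS j (Finset.mem_of_mem_erase hj)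
            have h2 := (Finset.mem_erase.mp hj).1
            omega
        _ = (3/100 : ℝ≥0∞) ^ (S.erase (m+1)).card * (3/100 : ℝ≥0∞) := mul_comm _ _
    · exact ih S fun j hj => by have := hS j hj; have : j ≠ m + 1 := fun h => hmem (h ▸ hj); omega

lemma lrw_count (P : Measure Θ) [IsProbabilityMeasure P] (B : ℕ → Θ → Bool)
    (hprod : ∀ (m : ℕ) (S : Finset ℕ), (∀ j ∈ S, 1 ≤ j ∧ j ≤ m) →
      P {ω | ∀ j ∈ S, B j ω = false} ≤ (3/100 : ℝ≥0∞) ^ S.card)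
    (a b z : ℕ) (ha : 1 ≤ a) :
    P {ω | z ≤ ((Finset.Ico a b).filter (fun j => B j ω = false)).card}
      ≤ (Nat.choose (b - a) z : ℝ≥0∞) * (3/100 : ℝ≥0∞) ^ z := by
  classical
  have hsub : {ω | z ≤ ((Finset.Ico a b).filter (fun j => B j ω = false)).card}
      ⊆ ⋃ S ∈ (Finset.Ico a b).powersetCard z, {ω | ∀ j ∈ S, B j ω = false} := by
    intro ω hω
    obtain ⟨T, hTsub, hTcard⟩ := Finset.exists_subset_card_eq hω
    refine Set.mem_iUnion₂.mpr ⟨T, Finset.mem_powersetCard.mpr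
      ⟨hTsub.trans (Finset.filter_subset _ _), hTcard⟩, fun j hj => ?_⟩
    exact (Finset.mem_filter.mp (hTsub hj)).2
  calc P {ω | z ≤ ((Finset.Ico a b).filter (fun j => B j ω = false)).card}
      ≤ P (⋃ S ∈ (Finset.Ico a b).powersetCard z, {ω | ∀ j ∈ S, B j ω = false}) :=
        measure_mono hsub
    _ ≤ ∑ S ∈ (Finset.Ico a b).powersetCard z, P {ω | ∀ j ∈ S, B j ω = false} :=
        measure_biUnion_finset_le _ _
    _ ≤ ∑ S ∈ (Finset.Ico a b).powersetCard z, (3/100 : ℝ≥0∞) ^ z := by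
        refine Finset.sum_le_sum fun S hS => ?_
        obtain ⟨hSsub, hScard⟩ := Finset.mem_powersetCard.mp hS
        have := hprod b S fun j hj => by
          have := Finset.mem_Ico.mp (hSsub hj); omega
        rwa [hScard] at this
    _ = (Nat.choose (b - a) z : ℝ≥0∞) * (3/100 : ℝ≥0∞) ^ z := by
        rw [Finset.sum_const, Finset.card_powersetCard, Nat.card_Ico, nsmul_eq_mul]

lemma lrw_path (B : ℕ → Θ → Bool) (X : ℕ → Θ → ℕ)
    (hstep1 : ∀ i ω, 1 ≤ i → B i ω = true → X (i + 1) ω = X i ω - 1)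
    (hstep0 : ∀ i ω, 1 ≤ i → B i ω = false → X (i + 1) ω ≤ X i ω + 1)
    (ω : Θ) (a : ℕ) (ha : 1 ≤ a) :
    ∀ b, a ≤ b → (∀ j, a < j → j ≤ b → X j ω ≠ 0) →
      X b ω + (b - a) ≤ X a ω + 2 * ((Finset.Ico a b).filter (fun j => B j ω = false)).card := by
  classical
  intro b
  induction b with
  | zero => intro hab _; exact absurd hab (by omega)
  | succ b ih =>
    intro hab hz
    rcases Nat.lt_or_ge a (b+1) with hlt | hge
    · have hab' : a ≤ b := by omega
      have hz' : ∀ j, a < j → j ≤ b → X j ω ≠ 0 := fun j h1 h2 => hz j h1 (by omega)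
      have hIH := ih hab' hz'
      have hins : Finset.Ico a (b+1) = insert b (Finset.Ico a b) := by
        rw [Nat.Ico_succ_right_eq_insert_Ico hab']
      have hbnot : b ∉ Finset.Ico a b := by simp
      have hXb1 : X (b+1) ω ≠ 0 := hz (b+1) (by omega) le_rfl
      set Z := ((Finset.Ico a b).filter (fun j => B j ω = false)).card with hZ
      cases hB : B b ω with
      | true =>
        have hXeq : X (b+1) ω = X b ω - 1 := hstep1 b ω (by omega) hB
        have hcard : ((Finset.Ico a (b+1)).filter (fun j => B j ω = false)).card = Z := by
          rw [hins, Finset.filter_insert, if_neg (by simp [hB])]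
        rw [hcard]
        omega
      | false =>
        have hXle : X (b+1) ω ≤ X b ω + 1 := hstep0 b ω (by omega) hB
        have hcard : ((Finset.Ico a (b+1)).filter (fun j => B j ω = false)).card = Z + 1 := by
          rw [hins, Finset.filter_insert, if_pos (by simp [hB]),
            Finset.card_insert_of_notMem (fun h => hbnot (Finset.filter_subset _ _ h))]
        rw [hcard]
        omega
    · have : a = b + 1 := by omega
      subst this
      simp

end LRWAux

lemma lrw_choose_le (n k : ℕ) : n.choose k ≤ 2 ^ n := by
  rcases le_or_gt k n with h | h
  · calc n.choose k ≤ ∑ m ∈ Finset.range (n+1), n.choose m :=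
        Finset.single_le_sum (fun i _ => Nat.zero_le _) (Finset.mem_range.mpr (by omega))
      _ = 2 ^ n := Nat.sum_range_choose n
  · rw [Nat.choose_eq_zero_of_lt h]; positivity

lemma lrw_num (l z : ℕ) (hlz : l ≤ 5 * z) :
    (Nat.choose l z : ℝ≥0∞) * (3/100 : ℝ≥0∞) ^ z ≤ ((2:ℝ≥0∞)⁻¹) ^ (5 * z - l) := by
  have h1 : (Nat.choose l z : ℝ≥0∞) ≤ 2 ^ l := by
    calc (Nat.choose l z : ℝ≥0∞) ≤ ((2 ^ l : ℕ) : ℝ≥0∞) := Nat.cast_le.mpr (lrw_choose_le l z)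
      _ = 2 ^ l := by push_cast; ring
  have hp : (3/100 : ℝ≥0∞) ≤ 2⁻¹ ^ 5 := by
    rw [show ((2:ℝ≥0∞)⁻¹)^5 = 32⁻¹ by rw [← ENNReal.inv_pow]; norm_num,
        show (3/100 : ℝ≥0∞) = (100/3)⁻¹ by
          rw [ENNReal.inv_div (by norm_num) (by norm_num)]]
    exact ENNReal.inv_le_inv.mpr
      ((ENNReal.le_div_iff_mul_le (by norm_num) (by norm_num)).mpr (by norm_num))
  calc (Nat.choose l z : ℝ≥0∞) * (3/100 : ℝ≥0∞) ^ z
      ≤ 2 ^ l * (2⁻¹ ^ 5) ^ z := mul_le_mul' h1 (pow_le_pow_left' hp z)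
    _ = 2 ^ l * 2⁻¹ ^ (5 * z) := by rw [← pow_mul, mul_comm 5 z]
    _ = 2 ^ l * (2⁻¹ ^ l * 2⁻¹ ^ (5 * z - l)) := by rw [← pow_add, Nat.add_sub_cancel' hlz]
    _ = (2 * 2⁻¹) ^ l * 2⁻¹ ^ (5 * z - l) := by rw [mul_pow, mul_assoc]
    _ = 2⁻¹ ^ (5 * z - l) := by
        rw [ENNReal.mul_inv_cancel (by norm_num) (by norm_num), one_pow, one_mul]

lemma lrw_pow_anti {m n : ℕ} (h : n ≤ m) : ((2:ℝ≥0∞)⁻¹)^m ≤ 2⁻¹^n :=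
  pow_le_pow_of_le_one zero_le (ENNReal.inv_le_one.mpr one_le_two) h

lemma lrw_sum (n : ℕ) :
    ∑ m ∈ Finset.Ico 1 n, ((2:ℝ≥0∞)⁻¹)^((n - m) + 3) ≤ ((2:ℝ≥0∞)⁻¹)^3 := by
  calc ∑ m ∈ Finset.Ico 1 n, ((2:ℝ≥0∞)⁻¹)^((n - m) + 3)
      = ∑ i ∈ Finset.range (n-1), ((2:ℝ≥0∞)⁻¹)^((n - (1+i)) + 3) := by
        rw [Finset.sum_Ico_eq_sum_range]
    _ = ∑ i ∈ Finset.range (n-1), ((2:ℝ≥0∞)⁻¹)^(((n-1) - 1 - i) + 4) :=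
        Finset.sum_congr rfl fun i hi => by
          have := Finset.mem_range.mp hi; congr 1; omega
    _ = ∑ i ∈ Finset.range (n-1), ((2:ℝ≥0∞)⁻¹)^(i + 4) :=
        Finset.sum_range_reflect (fun j => ((2:ℝ≥0∞)⁻¹)^(j + 4)) (n-1)
    _ ≤ ∑' i : ℕ, ((2:ℝ≥0∞)⁻¹)^(i + 4) := ENNReal.sum_le_tsum _
    _ = (∑' i : ℕ, ((2:ℝ≥0∞)⁻¹)^i) * 2⁻¹^4 := by
        rw [← ENNReal.tsum_mul_right]
        exact tsum_congr fun i => by rw [pow_add]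
    _ = 2 * (2⁻¹ * 2⁻¹^3) := by
        rw [ENNReal.tsum_geometric, ENNReal.one_sub_inv_two, inv_inv, pow_succ']
    _ = ((2:ℝ≥0∞)⁻¹)^3 := by
        rw [← mul_assoc, ENNReal.mul_inv_cancel (by norm_num) (by norm_num), one_mul]

/-- Linear random walk: X₁ = k; at each step i ≥ 1 a bit B_i is drawn with
    Pr[B_i = 1 | any history of B₁,…,B_{i−1}] ≥ 97/100; if B_i = 1 then
    X_{i+1} = max{0, X_i − 1} (ℕ-subtraction), and if B_i = 0 then
    X_{i+1} ≤ X_i + 1.  If n ≥ 20k + 1 then Pr[X_n = 0] ≥ 2/3. -/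
theorem linear_random_walk {Θ : Type*} [MeasurableSpace Θ]
    (P : Measure Θ) [IsProbabilityMeasure P]
    (k n : ℕ) (B : ℕ → Θ → Bool) (X : ℕ → Θ → ℕ)
    (hmB : ∀ i, Measurable (B i)) (hmX : ∀ i, Measurable (X i))
    (hX1 : ∀ ω, X 1 ω = k)
    (hcond : ∀ i, 1 ≤ i → ∀ h : ℕ → Bool,
      (97/100 : ℝ≥0∞) * P {ω | ∀ j, 1 ≤ j → j < i → B j ω = h j}
        ≤ P ({ω | B i ω = true} ∩ {ω | ∀ j, 1 ≤ j → j < i → B j ω = h j}))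
    (hstep1 : ∀ i ω, 1 ≤ i → B i ω = true → X (i + 1) ω = X i ω - 1)
    (hstep0 : ∀ i ω, 1 ≤ i → B i ω = false → X (i + 1) ω ≤ X i ω + 1)
    (hn : 20 * k + 1 ≤ n) :
    (2/3 : ℝ≥0∞) ≤ P {ω | X n ω = 0} := by
  classical
  have hn1 : 1 ≤ n := by omega
  have hcount := lrw_count P B (lrw_prod P B (lrw_aux_step P B hmB hcond))
  -- events
  set E : ℕ → Set Θ := fun m =>
    {ω | (n - m)/2 + 1 ≤ ((Finset.Ico m n).filter (fun j => B j ω = false)).card} with hE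
  set EB : Set Θ :=
    {ω | (n - k + 1)/2 ≤ ((Finset.Ico 1 n).filter (fun j => B j ω = false)).card} with hEB
  -- pathwise inclusion
  have hincl : {ω | X n ω ≠ 0} ⊆ ({ω | 1 ≤ k} ∩ EB) ∪ ⋃ m ∈ Finset.Ico 1 n, E m := by
    intro ω hω
    simp only [Set.mem_setOf_eq] at hω
    by_cases hex : ∃ m, m ≤ n ∧ 1 ≤ m ∧ X m ω = 0
    · right
      obtain ⟨m0, hm0n, hm0⟩ := hex
      set M := Nat.findGreatest (fun m => 1 ≤ m ∧ X m ω = 0) n with hM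
      have hspec : 1 ≤ M ∧ X M ω = 0 := by
        rw [hM]
        exact Nat.findGreatest_spec (P := fun m => 1 ≤ m ∧ X m ω = 0) hm0n hm0
      have hMn : M ≤ n := Nat.findGreatest_le n
      have hMlt : M < n := by
        rcases lt_or_eq_of_le hMn with h | h
        · exact h
        · exact absurd (h ▸ hspec.2) hω
      have hz : ∀ j, M < j → j ≤ n → X j ω ≠ 0 := by
        intro j h1 h2 hXj
        exact Nat.findGreatest_is_greatest h1 h2 ⟨by omega, hXj⟩
      have hp := lrw_path B X hstep1 hstep0 ω M hspec.1 n (le_of_lt hMlt) hz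
      rw [hspec.2] at hp
      refine Set.mem_biUnion (Finset.mem_Ico.mpr ⟨hspec.1, hMlt⟩) ?_
      simp only [hE, Set.mem_setOf_eq]
      omega
    · left
      push_neg at hex
      have hk1 : 1 ≤ k := by
        by_contra hk0
        exact hex 1 hn1 le_rfl (by rw [hX1 ω]; omega)
      have hz : ∀ j, 1 < j → j ≤ n → X j ω ≠ 0 := fun j h1 h2 => hex j h2 (by omega)
      have hp := lrw_path B X hstep1 hstep0 ω 1 le_rfl n hn1 hz
      rw [hX1 ω] at hp
      refine ⟨hk1, ?_⟩
      simp only [hEB, Set.mem_setOf_eq]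
      omega
  -- probability bounds
  have hPEB : P ({ω | 1 ≤ k} ∩ EB) ≤ ((2:ℝ≥0∞)⁻¹)^3 := by
    by_cases hk : 1 ≤ k
    · have hb := hcount 1 n ((n - k + 1)/2) le_rfl
      calc P ({ω | 1 ≤ k} ∩ EB) ≤ P EB := measure_mono Set.inter_subset_right
        _ ≤ (Nat.choose (n - 1) ((n - k + 1)/2) : ℝ≥0∞) * (3/100) ^ ((n - k + 1)/2) := hb
        _ ≤ ((2:ℝ≥0∞)⁻¹) ^ (5 * ((n - k + 1)/2) - (n - 1)) := lrw_num _ _ (by omega)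
        _ ≤ ((2:ℝ≥0∞)⁻¹)^3 := lrw_pow_anti (by omega)
    · have : {ω : Θ | 1 ≤ k} = ∅ := by
        ext ω; simp [hk]
      rw [this, Set.empty_inter, measure_empty]
      exact zero_le
  have hPE : ∀ m ∈ Finset.Ico 1 n, P (E m) ≤ ((2:ℝ≥0∞)⁻¹)^((n - m) + 3) := by
    intro m hm
    obtain ⟨hm1, hmn⟩ := Finset.mem_Ico.mp hm
    calc P (E m)
        ≤ (Nat.choose (n - m) ((n - m)/2 + 1) : ℝ≥0∞) * (3/100) ^ ((n - m)/2 + 1) :=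
          hcount m n ((n - m)/2 + 1) hm1
      _ ≤ ((2:ℝ≥0∞)⁻¹) ^ (5 * ((n - m)/2 + 1) - (n - m)) := lrw_num _ _ (by omega)
      _ ≤ ((2:ℝ≥0∞)⁻¹)^((n - m) + 3) := lrw_pow_anti (by omega)
  have hPF : P {ω | X n ω ≠ 0} ≤ 3⁻¹ := by
    calc P {ω | X n ω ≠ 0}
        ≤ P (({ω | 1 ≤ k} ∩ EB) ∪ ⋃ m ∈ Finset.Ico 1 n, E m) := measure_mono hincl
      _ ≤ P ({ω | 1 ≤ k} ∩ EB) + P (⋃ m ∈ Finset.Ico 1 n, E m) := measure_union_le _ _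
      _ ≤ ((2:ℝ≥0∞)⁻¹)^3 + ∑ m ∈ Finset.Ico 1 n, P (E m) :=
          add_le_add hPEB (measure_biUnion_finset_le _ _)
      _ ≤ ((2:ℝ≥0∞)⁻¹)^3 + ∑ m ∈ Finset.Ico 1 n, ((2:ℝ≥0∞)⁻¹)^((n - m) + 3) :=
          add_le_add_right (Finset.sum_le_sum hPE) _
      _ ≤ ((2:ℝ≥0∞)⁻¹)^3 + ((2:ℝ≥0∞)⁻¹)^3 := add_le_add_right (lrw_sum n) _
      _ ≤ 3⁻¹ := by
          rw [show ((2:ℝ≥0∞)⁻¹)^3 = 8⁻¹ by rw [← ENNReal.inv_pow]; norm_num,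
              show (8⁻¹ + 8⁻¹ : ℝ≥0∞) = 2 * 8⁻¹ by rw [two_mul],
              show (8 : ℝ≥0∞) = 2 * 4 by norm_num,
              ENNReal.mul_inv (by norm_num) (by norm_num), ← mul_assoc,
              ENNReal.mul_inv_cancel (by norm_num) (by norm_num), one_mul]
          exact ENNReal.inv_le_inv.mpr (by norm_num)
  -- conclude
  have hone : (1 : ℝ≥0∞) ≤ P {ω | X n ω = 0} + P {ω | X n ω ≠ 0} := by
    have : (Set.univ : Set Θ) ⊆ {ω | X n ω = 0} ∪ {ω | X n ω ≠ 0} := by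
      intro ω _
      by_cases h : X n ω = 0
      · exact Or.inl h
      · exact Or.inr h
    calc (1 : ℝ≥0∞) = P Set.univ := (measure_univ).symm
      _ ≤ P ({ω | X n ω = 0} ∪ {ω | X n ω ≠ 0}) := measure_mono this
      _ ≤ P {ω | X n ω = 0} + P {ω | X n ω ≠ 0} := measure_union_le _ _
  refine ENNReal.le_of_add_le_add_right (by norm_num : (3⁻¹:ℝ≥0∞) ≠ ⊤) ?_
  calc (2/3 : ℝ≥0∞) + 3⁻¹ = 1 := by
        rw [show (3⁻¹ : ℝ≥0∞) = 1/3 by rw [one_div], ENNReal.div_add_div_same,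
          show (2+1 : ℝ≥0∞) = 3 by norm_num]
        exact ENNReal.div_self (by norm_num) (by norm_num)
    _ ≤ P {ω | X n ω = 0} + P {ω | X n ω ≠ 0} := hone
    _ ≤ P {ω | X n ω = 0} + 3⁻¹ := add_le_add_right hPF _
end

section
/- Let μ and τ be distributions over a finite set Ω and c ∈ [0,1]. Let f_μ and f_τ be c-truncated functions for μ and τ respectively. Then d_TV(μ,τ) = (1/2)·(E_{x∼μ}[max{0, 1 − f_τ(x)/μ(x)}] + E_{x∼τ}[max{0, 1 − f_μ(x)/τ(x)}]) ± 2c, i.e., the difference between d_TV(μ,τ) and this half-sum of expectations has absolute value at most 2c. -/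
open Finset

lemma trunc_term_eq (a b : ℝ) (ha : 0 ≤ a) (hb : 0 ≤ b) :
    a * max 0 (1 - b / a) = max 0 (a - b) := by
  rcases eq_or_lt_of_le ha with h | h
  · rw [← h, zero_mul, zero_sub, max_eq_left (by linarith)]
  · rw [mul_max_of_nonneg _ _ (le_of_lt h), mul_zero]
    congr 1
    field_simp

lemma sum_small_cdf {Ω : Type*} [Fintype Ω] (ν : Ω → ℝ) (hν : ∀ x, 0 ≤ ν x)
    (c : ℝ) (hc : 0 ≤ c) :
    ∑ x ∈ univ.filter
        (fun x => (∑ y ∈ univ.filter (fun y => ν y ≤ ν x), ν y) < c), ν x ≤ c := by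
  set S := univ.filter
      (fun x => (∑ y ∈ univ.filter (fun y => ν y ≤ ν x), ν y) < c) with hS
  rcases S.eq_empty_or_nonempty with h | h
  · simp [h, hc]
  · obtain ⟨x, hxS, hmax⟩ := S.exists_max_image ν h
    have hsub : S ⊆ univ.filter (fun y => ν y ≤ ν x) := by
      intro y hy
      simp only [mem_filter, mem_univ, true_and]
      exact hmax y hy
    have h1 : ∑ y ∈ S, ν y ≤ ∑ y ∈ univ.filter (fun y => ν y ≤ ν x), ν y :=
      Finset.sum_le_sum_of_subset_of_nonneg hsub (fun i _ _ => hν i)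
    have h2 : (∑ y ∈ univ.filter (fun y => ν y ≤ ν x), ν y) < c := by
      have := hxS
      rw [hS, mem_filter] at this
      exact this.2
    linarith

/-- For c-truncated functions f_μ, f_τ of distributions μ, τ:
    d_TV(μ,τ) = (1/2)(E_{x∼μ}[max{0,1−f_τ(x)/μ(x)}] + E_{x∼τ}[max{0,1−f_μ(x)/τ(x)}]) ± 2c. -/
theorem dtv_via_truncated_functions {Ω : Type*} [Fintype Ω] (μ τ : Ω → ℝ)
    (c : ℝ) (hc : c ∈ Set.Icc (0:ℝ) 1)
    (hμ0 : ∀ x, 0 ≤ μ x) (hμ1 : ∑ x, μ x = 1)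
    (hτ0 : ∀ x, 0 ≤ τ x) (hτ1 : ∑ x, τ x = 1)
    (fμ fτ : Ω → ℝ)
    (hfμ : ∀ x,
      (c ≤ ∑ y ∈ Finset.univ.filter (fun y => μ y ≤ μ x), μ y → fμ x = μ x)
      ∧ ((∑ y ∈ Finset.univ.filter (fun y => μ y ≤ μ x), μ y) < c →
          fμ x = 0 ∨ fμ x = μ x))
    (hfτ : ∀ x,
      (c ≤ ∑ y ∈ Finset.univ.filter (fun y => τ y ≤ τ x), τ y → fτ x = τ x)
      ∧ ((∑ y ∈ Finset.univ.filter (fun y => τ y ≤ τ x), τ y) < c →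
          fτ x = 0 ∨ fτ x = τ x)) :
    |(1/2) * ∑ x, |μ x - τ x|
      - (1/2) * ((∑ x, μ x * max 0 (1 - fτ x / μ x))
                + (∑ x, τ x * max 0 (1 - fμ x / τ x)))| ≤ 2 * c := by
  obtain ⟨hc0, hc1⟩ := hc
  -- exact sums
  have key : ∀ (ν ρ fρ : Ω → ℝ), (∀ x, 0 ≤ ν x) → (∀ x, 0 ≤ ρ x) →
      (∀ x,
        (c ≤ ∑ y ∈ Finset.univ.filter (fun y => ρ y ≤ ρ x), ρ y → fρ x = ρ x)
        ∧ ((∑ y ∈ Finset.univ.filter (fun y => ρ y ≤ ρ x), ρ y) < c →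
            fρ x = 0 ∨ fρ x = ρ x)) →
      ∑ x, max 0 (ν x - ρ x) ≤ ∑ x, ν x * max 0 (1 - fρ x / ν x)
      ∧ ∑ x, ν x * max 0 (1 - fρ x / ν x) ≤ (∑ x, max 0 (ν x - ρ x)) + c := by
    intro ν ρ fρ hν hρ hf
    have hterm : ∀ x, max 0 (ν x - ρ x) ≤ ν x * max 0 (1 - fρ x / ν x)
        ∧ ν x * max 0 (1 - fρ x / ν x) ≤ max 0 (ν x - ρ x)
          + (if (∑ y ∈ univ.filter (fun y => ρ y ≤ ρ x), ρ y) < c then ρ x else 0) := by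
      intro x
      by_cases hlt : (∑ y ∈ univ.filter (fun y => ρ y ≤ ρ x), ρ y) < c
      · rcases (hf x).2 hlt with h0 | hρx
        · -- fρ x = 0
          rw [h0, if_pos hlt]
          rcases eq_or_lt_of_le (hν x) with he | hp
          · rw [← he, zero_mul, zero_sub, max_eq_left (by linarith [hρ x])]
            refine ⟨le_refl _, ?_⟩
            linarith [hρ x]
          · constructor
            · rw [zero_div, sub_zero, max_eq_right zero_le_one, mul_one]
              exact max_le (hν x) (by linarith [hρ x])
            · rw [zero_div, sub_zero, max_eq_right zero_le_one, mul_one]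
              rcases le_total (ν x - ρ x) 0 with h | h
              · rw [max_eq_left h]; linarith
              · rw [max_eq_right h]; linarith
        · rw [hρx, trunc_term_eq _ _ (hν x) (hρ x)]
          refine ⟨le_refl _, ?_⟩
          rw [if_pos hlt]; linarith [hρ x]
      · rw [(hf x).1 (le_of_not_gt hlt), trunc_term_eq _ _ (hν x) (hρ x), if_neg hlt,
          add_zero]
        exact ⟨le_refl _, le_refl _⟩
    constructor
    · exact Finset.sum_le_sum (fun x _ => (hterm x).1)
    · calc ∑ x, ν x * max 0 (1 - fρ x / ν x)
          ≤ ∑ x, (max 0 (ν x - ρ x)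
              + (if (∑ y ∈ univ.filter (fun y => ρ y ≤ ρ x), ρ y) < c then ρ x else 0)) :=
            Finset.sum_le_sum (fun x _ => (hterm x).2)
        _ = (∑ x, max 0 (ν x - ρ x))
              + ∑ x, (if (∑ y ∈ univ.filter (fun y => ρ y ≤ ρ x), ρ y) < c then ρ x else 0) :=
            Finset.sum_add_distrib
        _ ≤ (∑ x, max 0 (ν x - ρ x)) + c := by
            have := sum_small_cdf ρ hρ c hc0
            rw [Finset.sum_filter] at this
            linarith
  obtain ⟨hA1, hA2⟩ := key μ τ fτ hμ0 hτ0 hfτ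
  obtain ⟨hB1, hB2⟩ := key τ μ fμ hτ0 hμ0 hfμ
  have habs : ∑ x, |μ x - τ x|
      = (∑ x, max 0 (μ x - τ x)) + ∑ x, max 0 (τ x - μ x) := by
    rw [← Finset.sum_add_distrib]
    apply Finset.sum_congr rfl
    intro x _
    rcases le_total (μ x) (τ x) with h | h
    · rw [abs_of_nonpos (by linarith), max_eq_left (by linarith),
        max_eq_right (by linarith)]; ring
    · rw [abs_of_nonneg (by linarith), max_eq_right (by linarith),
        max_eq_left (by linarith)]; ring
  rw [abs_le]
  constructor <;> [skip; skip] <;> rw [habs] <;> linarith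
end

section
/- Define N₁ = 1 and N_i = ⌈(1+120ε)N_{i−1}⌉ for i ≥ 2. For every N ≥ 2, 0 < ε < 1/120, and k ≤ ln N/(240ε), we have ∑_{i=1}^{k} N_i < √N·(ln N)/ε². -/
/-- With N₁ = 1 and N_i = ⌈(1+120ε)N_{i−1}⌉, for every M ≥ 2, 0 < ε < 1/120 and
    k ≤ ln M/(240ε) one has ∑_{i=1}^k N_i < √M·(ln M)/ε². -/
theorem technical_sizes_of_Ai (ε : ℝ) (hε : 0 < ε) (hε' : ε < 1/120)
    (N : ℕ → ℕ) (hN1 : N 1 = 1)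
    (hrec : ∀ i, 2 ≤ i → N i = ⌈(1 + 120 * ε) * (N (i - 1) : ℝ)⌉₊)
    (M : ℝ) (hM : 2 ≤ M) (k : ℕ) (hk : (k : ℝ) ≤ Real.log M / (240 * ε)) :
    (∑ i ∈ Finset.Icc 1 k, (N i : ℝ)) < Real.sqrt M * Real.log M / ε ^ 2 := by
  set a : ℝ := 1 + 120 * ε with ha
  set b : ℝ := 1 / (120 * ε) with hb
  have hεpos : (0:ℝ) < 120 * ε := by positivity
  have hb1 : 1 < b := by
    rw [hb, lt_div_iff₀ hεpos]; linarith
  have hbpos : (0:ℝ) < b := by linarith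
  have ha1 : 1 < a := by rw [ha]; linarith
  have ha0 : (0:ℝ) < a := by linarith
  have hab : a * b = b + 1 := by
    rw [ha, hb]; field_simp
  -- key pointwise bound
  have key : ∀ i, 1 ≤ i → (N i : ℝ) ≤ (1 + b) * a ^ (i - 1) - b := by
    intro i hi
    induction i, hi using Nat.le_induction with
    | base => simp [hN1]
    | succ i hi ih =>
      have h2 : 2 ≤ i + 1 := by omega
      have hNi : (N (i + 1) : ℝ) = (⌈a * (N i : ℝ)⌉₊ : ℝ) := by
        rw [hrec (i + 1) h2]; simp
      have hx : (0:ℝ) ≤ a * (N i : ℝ) := by positivity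
      have hceil : ((⌈a * (N i : ℝ)⌉₊ : ℝ)) < a * (N i : ℝ) + 1 :=
        Nat.ceil_lt_add_one hx
      have hNile : a * (N i : ℝ) ≤ a * ((1 + b) * a ^ (i - 1) - b) :=
        mul_le_mul_of_nonneg_left ih (le_of_lt ha0)
      have hpow : a * ((1 + b) * a ^ (i - 1) - b) = (1 + b) * a ^ i - a * b := by
        have : a * a ^ (i - 1) = a ^ i := by
          rw [← pow_succ']
          congr 1
          omega
        rw [← this]; ring
      have : (N (i+1) : ℝ) < (1 + b) * a ^ i - a * b + 1 := by
        rw [hNi]; calc ((⌈a * (N i : ℝ)⌉₊ : ℝ)) < a * (N i : ℝ) + 1 := hceil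
          _ ≤ a * ((1 + b) * a ^ (i - 1) - b) + 1 := by linarith
          _ = (1 + b) * a ^ i - a * b + 1 := by rw [hpow]
      have hi1 : (i + 1) - 1 = i := by omega
      rw [hi1]
      rw [hab] at this
      linarith
  -- sum bound
  have sum_le : (∑ i ∈ Finset.Icc 1 k, (N i : ℝ)) ≤ (1 + b) * ∑ j ∈ Finset.range k, a ^ j := by
    rw [Finset.mul_sum]
    have : (∑ i ∈ Finset.Icc 1 k, (N i : ℝ)) ≤ ∑ i ∈ Finset.Icc 1 k, (1 + b) * a ^ (i - 1) := by
      apply Finset.sum_le_sum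
      intro i hi
      have hi1 : 1 ≤ i := (Finset.mem_Icc.mp hi).1
      have := key i hi1
      linarith
    refine this.trans_eq ?_
    have reindex : ∀ n : ℕ, ∑ i ∈ Finset.Icc 1 n, (1 + b) * a ^ (i - 1)
        = ∑ j ∈ Finset.range n, (1 + b) * a ^ j := by
      intro n
      induction n with
      | zero => simp
      | succ m ihm =>
        rw [Finset.sum_Icc_succ_top (by omega : 1 ≤ m + 1), ihm, Finset.sum_range_succ]
        simp
    exact reindex k
  have geom : ∑ j ∈ Finset.range k, a ^ j = (a ^ k - 1) / (a - 1) :=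
    geom_sum_eq (ne_of_gt ha1) k
  have hgeomle : (∑ j ∈ Finset.range k, a ^ j) ≤ a ^ k * b := by
    rw [geom, div_le_iff₀ (by linarith : (0:ℝ) < a - 1)]
    have hba : b * (a - 1) = 1 := by
      rw [hb, ha]; field_simp; ring
    have hak : (0:ℝ) < a ^ k := pow_pos ha0 k
    nlinarith
  -- a^k ≤ sqrt M
  have hMpos : (0:ℝ) < M := by linarith
  have hklog : 120 * ε * (k : ℝ) ≤ Real.log M / 2 := by
    rw [le_div_iff₀ (by positivity : (0:ℝ) < 240 * ε)] at hk
    linarith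
  have hsqrt : Real.sqrt M = Real.exp (Real.log M / 2) := by
    rw [Real.sqrt_eq_rpow, Real.rpow_def_of_pos hMpos]
    ring_nf
  have hak_le : a ^ k ≤ Real.sqrt M := by
    have h1 : a ≤ Real.exp (120 * ε) := by
      have := Real.add_one_le_exp (120 * ε)
      rw [ha]; linarith
    calc a ^ k ≤ (Real.exp (120 * ε)) ^ k :=
          pow_le_pow_left₀ (le_of_lt ha0) h1 k
      _ = Real.exp (120 * ε * k) := by
          rw [← Real.exp_nat_mul]; ring_nf
      _ ≤ Real.exp (Real.log M / 2) := Real.exp_le_exp.mpr hklog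
      _ = Real.sqrt M := hsqrt.symm
  have hsqrtpos : 0 < Real.sqrt M := Real.sqrt_pos.mpr hMpos
  have hlogM : Real.log M > 1 / 7200 := by
    have h2 : Real.log 2 ≤ Real.log M := Real.log_le_log (by norm_num) hM
    have := Real.log_two_gt_d9
    linarith
  have hb2 : b ^ 2 * ε ^ 2 = 1 / 14400 := by
    rw [hb]; field_simp; ring
  -- final chain
  have hfin : (1 + b) * (a ^ k * b) ≤ 2 * b ^ 2 * Real.sqrt M := by
    have h1b : 1 + b ≤ 2 * b := by linarith
    have hakb : a ^ k * b ≤ Real.sqrt M * b :=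
      mul_le_mul_of_nonneg_right hak_le (le_of_lt hbpos)
    have hakbpos : 0 ≤ a ^ k * b := by positivity
    calc (1 + b) * (a ^ k * b) ≤ 2 * b * (a ^ k * b) :=
          mul_le_mul_of_nonneg_right h1b hakbpos
      _ ≤ 2 * b * (Real.sqrt M * b) := by
          apply mul_le_mul_of_nonneg_left hakb; positivity
      _ = 2 * b ^ 2 * Real.sqrt M := by ring
  have hlast : 2 * b ^ 2 * Real.sqrt M < Real.sqrt M * Real.log M / ε ^ 2 := by
    rw [lt_div_iff₀ (by positivity : (0:ℝ) < ε ^ 2)]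
    have : 2 * b ^ 2 * Real.sqrt M * ε ^ 2 = Real.sqrt M * (2 * (b ^ 2 * ε ^ 2)) := by ring
    rw [this, hb2]
    have : Real.sqrt M * (2 * (1 / 14400)) = Real.sqrt M * (1 / 7200) := by ring
    rw [this]
    have := mul_lt_mul_of_pos_left hlogM hsqrtpos
    linarith
  have h2 : (1 + b) * (∑ j ∈ Finset.range k, a ^ j) ≤ (1 + b) * (a ^ k * b) := by
    apply mul_le_mul_of_nonneg_left hgeomle; linarith
  linarith
end

section
/- Let S = (S₁,…,S_k) be a (1+ε)-increasing non-empty k-partition (|S_i| ≥ (1+ε)|S_{i−1}| for 2 ≤ i ≤ k), and let I₁, I₂ ⊆ {1,…,k} both of size exactly k/2 with |I₁ Δ I₂| > k/30. Then for every permutation π of the union Ω = ∪S_i, the total variation distance between the chunk distribution μ_{S,I₁} and the π-pushforward of μ_{S,I₂} is greater than ε/120. -/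
open Finset

private lemma chunk_aux1 (ε m c d : ℝ) (hε0 : 0 < ε) (hε1 : ε ≤ 1) (hm : 0 < m)
    (hc : 1 ≤ c) (hd : 1 ≤ d) (h : (1 + ε) * d ≤ c) :
    ε/2 * (1/(m*c)) ≤ |1/(m*c) - 1/(m*d)| := by
  have hcp : (0:ℝ) < c := by linarith
  have hdp : (0:ℝ) < d := by linarith
  have h1 : (1 + ε) * (1/(m*c)) ≤ 1/(m*d) := by
    rw [mul_one_div, div_le_div_iff₀ (by positivity) (by positivity)]
    nlinarith
  have ha : (0:ℝ) < 1/(m*c) := by positivity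
  rw [abs_of_nonpos (by nlinarith)]
  nlinarith

private lemma chunk_aux2 (ε m c d : ℝ) (hε0 : 0 < ε) (hε1 : ε ≤ 1) (hm : 0 < m)
    (hc : 1 ≤ c) (hd : 1 ≤ d) (h : (1 + ε) * c ≤ d) :
    ε/2 * (1/(m*c)) ≤ |1/(m*c) - 1/(m*d)| := by
  have hcp : (0:ℝ) < c := by linarith
  have hdp : (0:ℝ) < d := by linarith
  have h1 : (1 + ε) * (1/(m*d)) ≤ 1/(m*c) := by
    rw [mul_one_div, div_le_div_iff₀ (by positivity) (by positivity)]
    nlinarith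
  have ha : (0:ℝ) < 1/(m*c) := by positivity
  have hb : (0:ℝ) < 1/(m*d) := by positivity
  have hdiff : ε/2 * (1/(m*c)) ≤ 1/(m*c) - 1/(m*d) := by
    nlinarith [mul_le_mul_of_nonneg_left h1 (by linarith : (0:ℝ) ≤ 1 - ε/2),
      mul_nonneg (mul_nonneg hε0.le (by linarith : (0:ℝ) ≤ 1 - ε)) hb.le]
  rw [abs_of_nonneg (by nlinarith)]
  exact hdiff

/-- For a (1+ε)-increasing non-empty k-partition S and I₁, I₂ ⊆ {1,…,k} of size k/2
    with |I₁ Δ I₂| > k/30, every permutation π of Ω = ∪S_i has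
    d_TV(μ_{S,I₁}, π·μ_{S,I₂}) > ε/120. -/
theorem chunk_distributions_far {α : Type*} [DecidableEq α]
    (k : ℕ) (ε : ℝ) (hε0 : 0 < ε) (hε1 : ε ≤ 1)
    (S : ℕ → Finset α)
    (hne : ∀ i ∈ Finset.Icc 1 k, (S i).Nonempty)
    (hdisj : ∀ i ∈ Finset.Icc 1 k, ∀ j ∈ Finset.Icc 1 k, i ≠ j → Disjoint (S i) (S j))
    (hinc : ∀ i, 2 ≤ i → i ≤ k → (1 + ε) * ((S (i - 1)).card : ℝ) ≤ ((S i).card : ℝ))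
    (I₁ I₂ : Finset ℕ) (hI₁ : I₁ ⊆ Finset.Icc 1 k) (hI₂ : I₂ ⊆ Finset.Icc 1 k)
    (hc₁ : 2 * I₁.card = k) (hc₂ : 2 * I₂.card = k)
    (hfar : (k : ℝ) < 30 * ((symmDiff I₁ I₂).card : ℝ))
    (μ₁ μ₂ : α → ℝ)
    (hμ₁ : ∀ i ∈ I₁, ∀ x ∈ S i, μ₁ x = 1 / ((I₁.card : ℝ) * ((S i).card : ℝ)))
    (hμ₁0 : ∀ x, x ∉ I₁.biUnion S → μ₁ x = 0)
    (hμ₂ : ∀ i ∈ I₂, ∀ x ∈ S i, μ₂ x = 1 / ((I₂.card : ℝ) * ((S i).card : ℝ)))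
    (hμ₂0 : ∀ x, x ∉ I₂.biUnion S → μ₂ x = 0)
    (π : Equiv.Perm α)
    (hπ : ∀ x ∈ (Finset.Icc 1 k).biUnion S, π x ∈ (Finset.Icc 1 k).biUnion S) :
    ε / 120 < (1/2) * ∑ x ∈ (Finset.Icc 1 k).biUnion S, |μ₁ x - μ₂ (π x)| := by
  classical
  -- k > 0
  have hk0 : 0 < k := by
    rcases Nat.eq_zero_or_pos k with h | h
    · exfalso
      subst h
      have h1 : I₁ = ∅ := subset_empty.mp (by simpa using hI₁)
      have h2 : I₂ = ∅ := subset_empty.mp (by simpa using hI₂)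
      rw [h1, h2] at hfar
      simp [symmDiff_self] at hfar
    · exact h
  set m := I₁.card with hmdef
  have hm1 : 1 ≤ m := by omega
  have hmpos : (0:ℝ) < m := by exact_mod_cast hm1
  have hcards : I₂.card = m := by omega
  -- monotonicity of sizes
  have hmono : ∀ i j, 1 ≤ i → i ≤ j → j ≤ k → ((S i).card : ℝ) ≤ ((S j).card : ℝ) := by
    intro i j h1 hij
    induction j, hij using Nat.le_induction with
    | base => intro _; exact le_refl _
    | succ n hn ih =>
      intro hk
      have h1' := ih (by omega)
      have h2 := hinc (n+1) (by omega) hk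
      simp only [Nat.add_sub_cancel] at h2
      nlinarith [(by positivity : (0:ℝ) ≤ ((S n).card : ℝ))]
  have hgap : ∀ i j, 1 ≤ i → i < j → j ≤ k →
      (1 + ε) * ((S i).card : ℝ) ≤ ((S j).card : ℝ) := by
    intro i j h1 hij hjk
    have h2 := hinc j (by omega) hjk
    have h3 := hmono i (j-1) h1 (by omega) (by omega)
    nlinarith
  -- pointwise key bound
  have key : ∀ i ∈ I₁ \ I₂, ∀ x ∈ S i,
      ε/2 * (1 / ((m:ℝ) * ((S i).card : ℝ))) ≤ |μ₁ x - μ₂ (π x)| := by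
    intro i hi x hx
    have hiI₁ : i ∈ I₁ := (mem_sdiff.mp hi).1
    have hiI₂ : i ∉ I₂ := (mem_sdiff.mp hi).2
    have hiIcc : i ∈ Finset.Icc 1 k := hI₁ hiI₁
    have hi1 : 1 ≤ i := (mem_Icc.mp hiIcc).1
    have hik : i ≤ k := (mem_Icc.mp hiIcc).2
    have hci : (1:ℝ) ≤ ((S i).card : ℝ) := by
      exact_mod_cast Nat.one_le_iff_ne_zero.mpr (card_ne_zero_of_mem hx)
    have hcipos : (0:ℝ) < ((S i).card : ℝ) := by linarith
    have hv1 : μ₁ x = 1 / ((m:ℝ) * ((S i).card : ℝ)) := hμ₁ i hiI₁ x hx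
    have hxΩ : x ∈ (Finset.Icc 1 k).biUnion S := mem_biUnion.mpr ⟨i, hiIcc, hx⟩
    obtain ⟨j, hjIcc, hπxj⟩ := mem_biUnion.mp (hπ x hxΩ)
    have hj1 : 1 ≤ j := (mem_Icc.mp hjIcc).1
    have hjk : j ≤ k := (mem_Icc.mp hjIcc).2
    have ha : (0:ℝ) < 1 / ((m:ℝ) * ((S i).card : ℝ)) := by positivity
    by_cases hjI₂ : j ∈ I₂
    · have hji : j ≠ i := fun h => hiI₂ (h ▸ hjI₂)
      have hcj : (1:ℝ) ≤ ((S j).card : ℝ) := by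
        exact_mod_cast Nat.one_le_iff_ne_zero.mpr (card_ne_zero_of_mem hπxj)
      have hcjpos : (0:ℝ) < ((S j).card : ℝ) := by linarith
      have hv2 : μ₂ (π x) = 1 / ((m:ℝ) * ((S j).card : ℝ)) := by
        rw [hμ₂ j hjI₂ _ hπxj, hcards]
      rw [hv1, hv2]
      rcases lt_or_gt_of_ne hji with hlt | hgt
      · exact chunk_aux1 ε m _ _ hε0 hε1 hmpos hci hcj (hgap j i hj1 hlt hik)
      · exact chunk_aux2 ε m _ _ hε0 hε1 hmpos hci hcj (hgap i j hi1 hgt hjk)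
    · -- π x lands outside the support of μ₂
      have hz : μ₂ (π x) = 0 := by
        apply hμ₂0
        intro hmem
        obtain ⟨j', hj', hx'⟩ := mem_biUnion.mp hmem
        have hj'j : j' ≠ j := fun h => hjI₂ (h ▸ hj')
        exact (disjoint_left.mp (hdisj j' (hI₂ hj') j hjIcc hj'j) hx') hπxj
      rw [hv1, hz]
      rw [abs_of_nonneg (by linarith)]
      nlinarith
  -- summation
  set d := (I₁ \ I₂).card with hddef
  have hsub : (I₁ \ I₂).biUnion S ⊆ (Finset.Icc 1 k).biUnion S :=
    biUnion_subset_biUnion_of_subset_left _ (fun x hx => hI₁ (mem_sdiff.mp hx).1)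
  have h1 : ∑ x ∈ (I₁ \ I₂).biUnion S, |μ₁ x - μ₂ (π x)|
      ≤ ∑ x ∈ (Finset.Icc 1 k).biUnion S, |μ₁ x - μ₂ (π x)| :=
    Finset.sum_le_sum_of_subset_of_nonneg hsub (fun x _ _ => abs_nonneg _)
  have h2 : ∑ x ∈ (I₁ \ I₂).biUnion S, |μ₁ x - μ₂ (π x)|
      = ∑ i ∈ I₁ \ I₂, ∑ x ∈ S i, |μ₁ x - μ₂ (π x)| := by
    apply Finset.sum_biUnion
    intro i hi j hj hij
    exact hdisj i (hI₁ (mem_sdiff.mp hi).1) j (hI₁ (mem_sdiff.mp hj).1) hij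
  have h3 : ∀ i ∈ I₁ \ I₂, ε/2 * (1/(m:ℝ)) ≤ ∑ x ∈ S i, |μ₁ x - μ₂ (π x)| := by
    intro i hi
    have hx0 := hne i (hI₁ (mem_sdiff.mp hi).1)
    have hci : (0:ℝ) < ((S i).card : ℝ) := by
      exact_mod_cast Nat.pos_of_ne_zero (Finset.card_ne_zero_of_mem hx0.choose_spec)
    have hcine : ((S i).card : ℝ) ≠ 0 := ne_of_gt hci
    have hmne : ((m:ℝ)) ≠ 0 := ne_of_gt hmpos
    calc ε/2 * (1/(m:ℝ))
        = ∑ _x ∈ S i, ε/2 * (1 / ((m:ℝ) * ((S i).card : ℝ))) := by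
          rw [Finset.sum_const, nsmul_eq_mul]
          field_simp
      _ ≤ ∑ x ∈ S i, |μ₁ x - μ₂ (π x)| := Finset.sum_le_sum (key i hi)
  have h4 : (d:ℝ) * (ε/2 * (1/(m:ℝ))) ≤ ∑ i ∈ I₁ \ I₂, ∑ x ∈ S i, |μ₁ x - μ₂ (π x)| := by
    calc (d:ℝ) * (ε/2 * (1/(m:ℝ))) = ∑ _i ∈ I₁ \ I₂, ε/2 * (1/(m:ℝ)) := by
          rw [Finset.sum_const, nsmul_eq_mul]
      _ ≤ _ := Finset.sum_le_sum h3
  -- symmDiff cardinality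
  have hΔ : (symmDiff I₁ I₂).card = 2 * d := by
    have e1 : symmDiff I₁ I₂ = (I₁ \ I₂) ∪ (I₂ \ I₁) := by
      simp [symmDiff_def, Finset.sup_eq_union]
    have e2 : (symmDiff I₁ I₂).card = (I₁ \ I₂).card + (I₂ \ I₁).card := by
      rw [e1]; exact card_union_of_disjoint (disjoint_sdiff_sdiff)
    have e3 := Finset.card_sdiff_add_card_inter I₁ I₂
    have e4 := Finset.card_sdiff_add_card_inter I₂ I₁
    rw [Finset.inter_comm] at e4
    omega
  have hmd : (m:ℝ) < 30 * (d:ℝ) := by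
    have : ((2*m : ℕ):ℝ) < 30 * ((2*d : ℕ):ℝ) := by
      rw [← hΔ]; rw [← hc₁] at hfar; exact_mod_cast hfar
    push_cast at this
    linarith
  have hfin : ε/120 < (1/2) * ((d:ℝ) * (ε/2 * (1/(m:ℝ)))) := by
    rw [show (1/2) * ((d:ℝ) * (ε/2 * (1/(m:ℝ)))) = ε * d / (4 * m) by field_simp; ring]
    rw [div_lt_div_iff₀ (by norm_num) (by positivity)]
    nlinarith [mul_lt_mul_of_pos_left hmd hε0]
  calc ε/120 < (1/2) * ((d:ℝ) * (ε/2 * (1/(m:ℝ)))) := hfin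
    _ ≤ (1/2) * ∑ x ∈ (Finset.Icc 1 k).biUnion S, |μ₁ x - μ₂ (π x)| := by
        apply mul_le_mul_of_nonneg_left _ (by norm_num)
        calc (d:ℝ) * (ε/2 * (1/(m:ℝ))) ≤ _ := h4
          _ = _ := h2.symm
          _ ≤ _ := h1
end

section
/- Let 𝓘 ⊆ 2^{{1,…,k}} be a q-uniform family: for every J ⊆ {1,…,k} with |J| = q, the intersection J ∩ I for I drawn uniformly from 𝓘 is uniformly distributed over all subsets of J. Then the family 𝓘' = { I ∪ ((2k+1) − ({1,…,k}∖I)) : I ∈ 𝓘 } ⊆ 2^{{1,…,2k}} is a paired q-uniform family: every member is 2k-paired, and for every J ⊆ {1,…,2k} of size q disjoint from (2k+1)−J, the intersection J ∩ I' for I' uniform in 𝓘' is uniform over subsets of J. -/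
open Finset

private lemma mem_pair_aux (k : ℕ) (I : Finset ℕ) (hI : I ⊆ Finset.Icc 1 k) (x : ℕ) :
    (x ∈ I ∪ ((Finset.Icc 1 k \ I).image (fun i => 2 * k + 1 - i))) ↔
      x ∈ I ∨ (k + 1 ≤ x ∧ x ≤ 2 * k ∧ 2 * k + 1 - x ∉ I) := by
  simp only [mem_union, mem_image, mem_sdiff, mem_Icc]
  constructor
  · rintro (h | ⟨i, ⟨⟨h1, h2⟩, hiI⟩, rfl⟩)
    · exact Or.inl h
    · right
      refine ⟨by omega, by omega, ?_⟩
      have heq : 2 * k + 1 - (2 * k + 1 - i) = i := by omega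
      rwa [heq]
  · rintro (h | ⟨h1, h2, h3⟩)
    · exact Or.inl h
    · exact Or.inr ⟨2 * k + 1 - x, ⟨⟨by omega, by omega⟩, h3⟩, by omega⟩

private lemma pair_inter_Icc (k : ℕ) (I : Finset ℕ) (hI : I ⊆ Finset.Icc 1 k) :
    (I ∪ ((Finset.Icc 1 k \ I).image (fun i => 2 * k + 1 - i))) ∩ Finset.Icc 1 k = I := by
  ext x
  rw [mem_inter, mem_pair_aux k I hI, mem_Icc]
  constructor
  · rintro ⟨h | ⟨h1, h2, h3⟩, hx1, hx2⟩
    · exact h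
    · omega
  · intro h
    have hb := hI h
    rw [mem_Icc] at hb
    exact ⟨Or.inl h, hb⟩

/-- If 𝓘 ⊆ 2^{1..k} is a q-uniform family (for a uniform I ∈ 𝓘 and any J of size q,
    I ∩ J is uniform over 2^J — stated by counting), then
    𝓘' = { I ∪ ((2k+1) − ({1,…,k}∖I)) : I ∈ 𝓘 } is a paired q-uniform family of
    subsets of {1,…,2k}: every member is 2k-paired, and for every J ⊆ {1,…,2k} of
    size q disjoint from (2k+1)−J, intersections with J are uniform. -/
theorem pairing_preserves_q_uniformity (k q : ℕ)
    (𝓘 : Finset (Finset ℕ)) (h𝓘ne : 𝓘.Nonempty)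
    (hsub : ∀ I ∈ 𝓘, I ⊆ Finset.Icc 1 k)
    (hunif : ∀ J ⊆ Finset.Icc 1 k, J.card = q → ∀ I' ⊆ J,
      (𝓘.filter (fun I => I ∩ J = I')).card * 2 ^ q = 𝓘.card) :
    (∀ I' ∈ 𝓘.image (fun I => I ∪ ((Finset.Icc 1 k \ I).image (fun i => 2 * k + 1 - i))),
        I'.image (fun i => 2 * k + 1 - i) = Finset.Icc 1 (2 * k) \ I')
    ∧ (∀ J ⊆ Finset.Icc 1 (2 * k), J.card = q →
        Disjoint J (J.image (fun i => 2 * k + 1 - i)) → ∀ I' ⊆ J,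
        ((𝓘.image (fun I => I ∪ ((Finset.Icc 1 k \ I).image (fun i => 2 * k + 1 - i)))).filter
            (fun I => I ∩ J = I')).card * 2 ^ q
          = (𝓘.image (fun I => I ∪ ((Finset.Icc 1 k \ I).image
              (fun i => 2 * k + 1 - i)))).card) := by
  constructor
  · -- Part 1: each member is 2k-paired
    intro I' hI'
    simp only [mem_image] at hI'
    obtain ⟨I, hI, rfl⟩ := hI'
    have hIs := hsub I hI
    ext x
    simp only [mem_image, mem_sdiff, mem_Icc]
    rw [mem_pair_aux k I hIs]
    constructor
    · rintro ⟨y, hy, rfl⟩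
      rw [mem_pair_aux k I hIs] at hy
      rcases hy with h | ⟨h1, h2, h3⟩
      · have hyI := hIs h
        rw [mem_Icc] at hyI
        refine ⟨⟨by omega, by omega⟩, ?_⟩
        rintro (h' | ⟨h1', h2', h3'⟩)
        · have hb := hIs h'; rw [mem_Icc] at hb; omega
        · have heq : 2 * k + 1 - (2 * k + 1 - y) = y := by omega
          rw [heq] at h3'; exact h3' h
      · refine ⟨⟨by omega, by omega⟩, ?_⟩
        rintro (h' | ⟨h1', h2', h3'⟩)
        · exact absurd h' h3
        · omega
    · rintro ⟨⟨hx1, hx2⟩, hnot⟩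
      push_neg at hnot
      obtain ⟨hxI, hx3⟩ := hnot
      by_cases hk : x ≤ k
      · refine ⟨2 * k + 1 - x, ?_, by omega⟩
        rw [mem_pair_aux k I hIs]
        right
        refine ⟨by omega, by omega, ?_⟩
        have heq : 2 * k + 1 - (2 * k + 1 - x) = x := by omega
        rw [heq]; exact hxI
      · refine ⟨2 * k + 1 - x, ?_, by omega⟩
        rw [mem_pair_aux k I hIs]
        exact Or.inl (hx3 (by omega) (by omega))
  · -- Part 2: paired q-uniformity
    intro J hJ hJq hdisj I'' hI''
    have hJmem : ∀ j ∈ J, 1 ≤ j ∧ j ≤ 2 * k := fun j hj => by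
      have hb := hJ hj; rw [mem_Icc] at hb; exact hb
    have hdis : ∀ x ∈ J, 2 * k + 1 - x ∉ J := by
      intro x hx hcon
      exact (Finset.disjoint_left.mp hdisj hcon) (mem_image_of_mem _ hx)
    set π : ℕ → ℕ := fun j => if j ≤ k then j else 2 * k + 1 - j with hπdef
    set J₀ : Finset ℕ := J.image π with hJ₀def
    have hJ₀sub : J₀ ⊆ Finset.Icc 1 k := by
      intro x hx
      simp only [hJ₀def, mem_image] at hx
      obtain ⟨j, hj, rfl⟩ := hx
      obtain ⟨h1, h2⟩ := hJmem j hj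
      rw [mem_Icc]
      simp only [hπdef]
      split <;> omega
    have hinj : Set.InjOn π J := by
      intro a ha b hb hab
      rw [Finset.mem_coe] at ha hb
      simp only [hπdef] at hab
      obtain ⟨ha1, ha2⟩ := hJmem a ha
      obtain ⟨hb1, hb2⟩ := hJmem b hb
      by_cases hak : a ≤ k <;> by_cases hbk : b ≤ k <;>
        simp only [hak, hbk, if_true, if_false] at hab
      · exact hab
      · exfalso; apply hdis b hb; rwa [← hab]
      · exfalso; apply hdis a ha; rwa [hab]
      · omega
    have hJ₀card : J₀.card = q := by
      rw [hJ₀def, Finset.card_image_of_injOn hinj, hJq]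
    set I₀ : Finset ℕ := J₀.filter (fun x => x ∈ I'' ∨ (2 * k + 1 - x ∈ J ∧ 2 * k + 1 - x ∉ I''))
      with hI₀def
    have hI₀sub : I₀ ⊆ J₀ := filter_subset _ _
    -- membership helpers
    have hlow : ∀ x ∈ J, x ≤ k → x ∈ J₀ := by
      intro x hx hxk
      rw [hJ₀def, mem_image]
      exact ⟨x, hx, by simp [hπdef, hxk]⟩
    have hhigh : ∀ x ∈ J, ¬ x ≤ k → 2 * k + 1 - x ∈ J₀ := by
      intro x hx hxk
      rw [hJ₀def, mem_image]
      exact ⟨x, hx, by simp [hπdef, hxk]⟩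
    -- the key equivalence
    have key : ∀ I ∈ 𝓘,
        ((I ∪ ((Finset.Icc 1 k \ I).image (fun i => 2 * k + 1 - i))) ∩ J = I'' ↔
          I ∩ J₀ = I₀) := by
      intro I hI
      have hIs := hsub I hI
      constructor
      · intro h
        ext x
        rw [mem_inter, hI₀def, mem_filter]
        constructor
        · rintro ⟨hxI, hxJ₀⟩
          refine ⟨hxJ₀, ?_⟩
          rw [hJ₀def, mem_image] at hxJ₀
          obtain ⟨j, hj, hjx⟩ := hxJ₀
          simp only [hπdef] at hjx
          obtain ⟨hj1, hj2⟩ := hJmem j hj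
          by_cases hjk : j ≤ k
          · rw [if_pos hjk] at hjx
            subst hjx
            left
            rw [← h, mem_inter]
            exact ⟨(mem_pair_aux k I hIs j).mpr (Or.inl hxI), hj⟩
          · rw [if_neg hjk] at hjx
            right
            have hjx' : 2 * k + 1 - x = j := by omega
            rw [hjx']
            refine ⟨hj, fun hc => ?_⟩
            rw [← h, mem_inter, mem_pair_aux k I hIs] at hc
            rcases hc.1 with hc1 | ⟨_, _, hc3⟩
            · have hb := hIs hc1; rw [mem_Icc] at hb; omega
            · rw [hjx] at hc3; exact hc3 hxI
        · rintro ⟨hxJ₀, hor⟩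
          refine ⟨?_, hxJ₀⟩
          have hxb := hJ₀sub hxJ₀
          rw [mem_Icc] at hxb
          rcases hor with hx'' | ⟨hsJ, hsI⟩
          · have hxf : x ∈ (I ∪ ((Finset.Icc 1 k \ I).image (fun i => 2 * k + 1 - i))) := by
              have hm : x ∈ (I ∪ ((Finset.Icc 1 k \ I).image (fun i => 2 * k + 1 - i))) ∩ J := by
                rw [h]; exact hx''
              exact (mem_inter.mp hm).1
            rw [mem_pair_aux k I hIs] at hxf
            rcases hxf with h1 | ⟨h1, _, _⟩
            · exact h1
            · omega
          · have hsf : 2 * k + 1 - x ∉ (I ∪ ((Finset.Icc 1 k \ I).image (fun i => 2 * k + 1 - i))) := by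
              intro hc
              exact hsI (h ▸ mem_inter.mpr ⟨hc, hsJ⟩)
            rw [mem_pair_aux k I hIs] at hsf
            push_neg at hsf
            have heq : 2 * k + 1 - (2 * k + 1 - x) = x := by omega
            have := hsf.2 (by omega) (by omega)
            rwa [heq] at this
      · intro h
        ext x
        rw [mem_inter, mem_pair_aux k I hIs]
        constructor
        · rintro ⟨hxf, hxJ⟩
          obtain ⟨hx1, hx2⟩ := hJmem x hxJ
          rcases hxf with hxI | ⟨h1, h2, h3⟩
          · have hxk : x ≤ k := by have hb := hIs hxI; rw [mem_Icc] at hb; omega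
            have hxJ₀ := hlow x hxJ hxk
            have : x ∈ I₀ := h ▸ mem_inter.mpr ⟨hxI, hxJ₀⟩
            rw [hI₀def, mem_filter] at this
            rcases this.2 with h'' | ⟨hsJ, _⟩
            · exact h''
            · exact absurd hsJ (hdis x hxJ)
          · -- x high
            have hyJ₀ := hhigh x hxJ (by omega)
            have hyI₀ : 2 * k + 1 - x ∉ I₀ := by
              intro hc
              exact h3 (mem_inter.mp (h ▸ hc)).1
            rw [hI₀def, mem_filter] at hyI₀
            push_neg at hyI₀
            have heq : 2 * k + 1 - (2 * k + 1 - x) = x := by omega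
            have hres := (hyI₀ hyJ₀).2
            rw [heq] at hres
            exact hres hxJ
        · intro hx''
          have hxJ := hI'' hx''
          obtain ⟨hx1, hx2⟩ := hJmem x hxJ
          refine ⟨?_, hxJ⟩
          by_cases hxk : x ≤ k
          · left
            have hxJ₀ := hlow x hxJ hxk
            have hxI₀ : x ∈ I₀ := by
              rw [hI₀def, mem_filter]; exact ⟨hxJ₀, Or.inl hx''⟩
            exact (mem_inter.mp (h ▸ hxI₀)).1
          · right
            refine ⟨by omega, by omega, ?_⟩
            have hyJ₀ := hhigh x hxJ hxk
            have hyI₀ : 2 * k + 1 - x ∉ I₀ := by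
              rw [hI₀def, mem_filter]
              rintro ⟨-, hc | ⟨hsJ, hns⟩⟩
              · exact (hdis x hxJ) (hI'' hc)
              · have heq : 2 * k + 1 - (2 * k + 1 - x) = x := by omega
                rw [heq] at hns
                exact hns hx''
            intro hc
            exact hyI₀ (h ▸ mem_inter.mpr ⟨hc, hyJ₀⟩)
    -- counting
    have hinjf : Set.InjOn (fun I => I ∪ ((Finset.Icc 1 k \ I).image (fun i => 2 * k + 1 - i))) 𝓘 := by
      intro a ha b hb hab
      simp only at hab
      have := congrArg (· ∩ Finset.Icc 1 k) hab
      simpa [pair_inter_Icc k a (hsub a ha), pair_inter_Icc k b (hsub b hb)] using this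
    rw [Finset.filter_image, Finset.card_image_of_injOn
        (hinjf.mono (Finset.coe_subset.mpr (filter_subset _ _))),
      Finset.card_image_of_injOn hinjf,
      Finset.filter_congr key]
    exact hunif J₀ hJ₀sub hJ₀card I₀ hI₀sub
end

section
/- Let μ' be the empirical distribution of q ≥ n/ε² i.i.d. samples from a distribution μ over {1,…,n}, with n ≥ 16 and ε ∈ (0,1). Then with probability at least 8/9: (a) d_TV(μ, μ') ≤ ε, and (b) μ'(i) ≤ 2·max{ε², μ(i)} for every 1 ≤ i ≤ n. -/
open Finset

/- ## Analytic lemmas -/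

lemma Flem (p y : ℝ) (hy0 : 0 ≤ y) (hy2 : y ≤ 2) (hp0 : 0 ≤ p) (hp1 : p ≤ 1) :
    0 ≤ (1/2)*((1-p)*(1 + y + y^2/2 + 13*y^3/72 + 25*y^4/576 + y^5/144 + y^6/1296) + p)
       - p*(1-p)*(1 + y/2 + 13*y^2/72 + 25*y^3/576 + y^4/144 + y^5/1296) := by
  have hR : (0:ℝ) ≤ 1 + y/2 + 13*y^2/72 + 25*y^3/576 + y^4/144 + y^5/1296 := by positivity
  nlinarith [mul_nonneg hR (sq_nonneg (p - 1/2 - y/4)), mul_nonneg hp0 hy0,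
    mul_nonneg (sub_nonneg.2 hp1) hy0, sq_nonneg y, mul_nonneg (mul_nonneg hy0 hy0) hy0,
    mul_nonneg (mul_nonneg (mul_nonneg hy0 hy0) hy0) hy0,
    mul_nonneg (mul_nonneg (mul_nonneg (mul_nonneg hy0 hy0) hy0) hy0) hy0]

lemma expQ (y : ℝ) (hy0 : 0 ≤ y) (hy2 : y ≤ 2) :
    Real.exp y ≤ (1 + y/2 + y^2/8 + y^3/36)^2 := by
  have h := Real.exp_bound' (x := y/2) (by linarith) (by linarith) (n := 3) (by norm_num)
  have h2 : Real.exp (y/2) ≤ 1 + y/2 + y^2/8 + y^3/36 := by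
    convert h using 1
    simp [Finset.sum_range_succ, Nat.factorial]
    ring
  calc Real.exp y = Real.exp (y/2) * Real.exp (y/2) := by
        rw [← Real.exp_add]; ring_nf
    _ ≤ (1 + y/2 + y^2/8 + y^3/36)^2 := by
        rw [sq]
        exact mul_le_mul h2 h2 (Real.exp_pos _).le (by positivity)

lemma Dlem (p y : ℝ) (hy0 : 0 ≤ y) (hy2 : y ≤ 2) (hp0 : 0 ≤ p) (hp1 : p ≤ 1) :
    0 ≤ y/2*(1 - p + p*Real.exp (-y)) - p*(1-p)*(1 - Real.exp (-y)) := by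
  set w := Real.exp (-y) with hw
  have hwpos : 0 < w := Real.exp_pos _
  have hQ : Real.exp y ≤ (1 + y/2 + y^2/8 + y^3/36)^2 := expQ y hy0 hy2
  have hQpos : 0 < (1 + y/2 + y^2/8 + y^3/36)^2 := by positivity
  have hwQ : 1 ≤ w * (1 + y/2 + y^2/8 + y^3/36)^2 := by
    have : w * Real.exp y = 1 := by rw [hw, ← Real.exp_add]; simp
    nlinarith [mul_le_mul_of_nonneg_left hQ hwpos.le]
  have hE : 0 ≤ y/2*((1-p)*(1 + y/2 + y^2/8 + y^3/36)^2 + p)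
      - p*(1-p)*((1 + y/2 + y^2/8 + y^3/36)^2 - 1) := by
    nlinarith [mul_nonneg hy0 (Flem p y hy0 hy2 hp0 hp1)]
  have hB : 0 ≤ y/2*p + p*(1-p) := by
    have := mul_nonneg hp0 (sub_nonneg.2 hp1); positivity
  nlinarith [mul_nonneg hB (sub_nonneg.2 hwQ), hE, hQpos, mul_pos hQpos hwpos]

lemma mgf_bound (p t : ℝ) (hp0 : 0 ≤ p) (hp1 : p ≤ 1) (ht2 : -2 ≤ t) (ht0 : t ≤ 0) :
    1 - p + p * Real.exp t ≤ Real.exp (p*t + t^2/4) := by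
  set h : ℝ → ℝ := fun s => (1 - p + p * Real.exp s) * Real.exp (-(p*s) - s^2/4) with hdef
  have hder : ∀ s : ℝ, HasDerivAt h
      ((p * Real.exp s - (p + s/2) * (1 - p + p * Real.exp s)) * Real.exp (-(p*s) - s^2/4)) s := by
    intro s
    have hM : HasDerivAt (fun s => 1 - p + p * Real.exp s) (p * Real.exp s) s :=
      ((Real.hasDerivAt_exp s).const_mul p).const_add (1-p)
    have hg : HasDerivAt (fun s : ℝ => -(p*s) - s^2/4) (-p - s/2) s := by
      have h1 : HasDerivAt (fun s : ℝ => p*s) p s := by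
        simpa using (hasDerivAt_id s).const_mul p
      have h2 : HasDerivAt (fun s : ℝ => s^2/4) (s/2) s := by
        have := (hasDerivAt_pow 2 s).div_const 4
        refine this.congr_deriv ?_
        ring
      exact h1.neg.sub h2
    have := hM.mul hg.exp
    refine this.congr_deriv ?_
    ring
  have hmono : MonotoneOn h (Set.Icc (-2 : ℝ) 0) := by
    apply monotoneOn_of_deriv_nonneg (convex_Icc _ _)
    · exact fun s _ => ((hder s).continuousAt).continuousWithinAt
    · exact fun s _ => ((hder s).differentiableAt).differentiableWithinAt
    · intro s hs
      rw [interior_Icc] at hs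
      rw [(hder s).deriv]
      have hD := Dlem p (-s) (by linarith [hs.2]) (by linarith [hs.1]) hp0 hp1
      have hbr : 0 ≤ p * Real.exp s - (p + s/2) * (1 - p + p * Real.exp s) := by
        simp only [neg_neg] at hD
        nlinarith [hD]
      exact mul_nonneg hbr (Real.exp_pos _).le
  have hle : h t ≤ h 0 := hmono ⟨ht2, ht0⟩ ⟨by norm_num, le_refl 0⟩ ht0
  have h0 : h 0 = 1 := by simp [hdef]
  rw [h0, hdef] at hle
  simp only at hle
  have hpos := (Real.exp_pos (p*t + t^2/4)).le
  have := mul_le_mul_of_nonneg_right hle hpos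
  rw [one_mul, mul_assoc, ← Real.exp_add] at this
  rw [show -(p*t) - t^2/4 + (p*t + t^2/4) = 0 by ring, Real.exp_zero, mul_one] at this
  exact this

/- ## Combinatorial lemmas -/

lemma my_sum_prod_pow (n q : ℕ) (g : Fin n → ℝ) :
    ∑ s : Fin q → Fin n, ∏ j, g (s j) = (∑ i, g i)^q := by
  classical
  rw [← Fintype.piFinset_univ, ← Finset.prod_univ_sum]
  simp

lemma my_mgf (n q : ℕ) (μ : Fin n → ℝ) (A : Finset (Fin n)) (t : ℝ) :
    ∑ s : Fin q → Fin n, (∏ j, μ (s j)) *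
        Real.exp (t * ((Finset.univ.filter (fun j => s j ∈ A)).card : ℝ))
      = (∑ i, μ i * (if i ∈ A then Real.exp t else 1))^q := by
  classical
  have key : ∀ s : Fin q → Fin n, (∏ j, μ (s j)) *
      Real.exp (t * ((Finset.univ.filter (fun j => s j ∈ A)).card : ℝ))
      = ∏ j, (μ (s j) * (if s j ∈ A then Real.exp t else 1)) := by
    intro s
    rw [Finset.prod_mul_distrib]
    congr 1
    rw [Finset.card_filter]
    push_cast
    rw [Finset.mul_sum, Real.exp_sum]
    apply Finset.prod_congr rfl
    intro j _
    split_ifs with hj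
    · simp
    · simp
  rw [Finset.sum_congr rfl (fun s _ => key s)]
  exact my_sum_prod_pow n q (fun i => μ i * (if i ∈ A then Real.exp t else 1))

lemma my_markov (n q : ℕ) (μ : Fin n → ℝ) (hμ0 : ∀ i, 0 ≤ μ i)
    (S : Finset (Fin q → Fin n)) (W : (Fin q → Fin n) → ℝ)
    (hW : ∀ s, 0 ≤ W s) (h1 : ∀ s ∈ S, 1 ≤ W s) :
    ∑ s ∈ S, ∏ j, μ (s j) ≤ ∑ s : Fin q → Fin n, (∏ j, μ (s j)) * W s := by
  have hP : ∀ s : Fin q → Fin n, 0 ≤ ∏ j, μ (s j) :=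
    fun s => Finset.prod_nonneg fun j _ => hμ0 _
  calc ∑ s ∈ S, ∏ j, μ (s j) ≤ ∑ s ∈ S, (∏ j, μ (s j)) * W s :=
        Finset.sum_le_sum fun s hs => le_mul_of_one_le_right (hP s) (h1 s hs)
    _ ≤ ∑ s : Fin q → Fin n, (∏ j, μ (s j)) * W s :=
        Finset.sum_le_sum_of_subset_of_nonneg (Finset.subset_univ S)
          fun s _ _ => mul_nonneg (hP s) (hW s)

lemma my_sum_biUnion_le {α β : Type*} [DecidableEq β] (f : β → ℝ) (hf : ∀ x, 0 ≤ f x)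
    (s : Finset α) (t : α → Finset β) :
    ∑ x ∈ s.biUnion t, f x ≤ ∑ a ∈ s, ∑ x ∈ t a, f x := by
  classical
  induction s using Finset.induction_on with
  | empty => simp
  | insert a s ha ih =>
    rw [Finset.biUnion_insert, Finset.sum_insert ha]
    have h1 := Finset.sum_union_inter (s₁ := t a) (s₂ := s.biUnion t) (f := f)
    have h2 : 0 ≤ ∑ x ∈ (t a ∩ s.biUnion t), f x := Finset.sum_nonneg fun x _ => hf x
    linarith

/- ## Chernoff bounds -/

lemma chernoff_lower (n q : ℕ) (μ : Fin n → ℝ) (hμ0 : ∀ i, 0 ≤ μ i) (hμ1 : ∑ i, μ i = 1)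
    (ε : ℝ) (hε0 : 0 < ε) (hε1 : ε ≤ 1) (A : Finset (Fin n)) :
    ∑ s ∈ Finset.univ.filter (fun s : Fin q → Fin n =>
        ((Finset.univ.filter (fun j => s j ∈ A)).card : ℝ) ≤ ((∑ i ∈ A, μ i) - ε) * q),
      ∏ j, μ (s j) ≤ Real.exp (-(ε^2) * q) := by
  classical
  set p := ∑ i ∈ A, μ i with hpdef
  have hp0 : 0 ≤ p := Finset.sum_nonneg fun i _ => hμ0 i
  have hp1 : p ≤ 1 := by
    rw [← hμ1]
    exact Finset.sum_le_sum_of_subset_of_nonneg (Finset.subset_univ A) fun i _ _ => hμ0 i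
  set X : (Fin q → Fin n) → ℝ :=
    fun s => ((Finset.univ.filter (fun j => s j ∈ A)).card : ℝ) with hXdef
  set W : (Fin q → Fin n) → ℝ :=
    fun s => Real.exp (2*ε*((p - ε)*(q:ℝ) - X s)) with hWdef
  have step1 : ∑ s ∈ Finset.univ.filter (fun s : Fin q → Fin n => X s ≤ (p - ε) * q),
      ∏ j, μ (s j) ≤ ∑ s : Fin q → Fin n, (∏ j, μ (s j)) * W s := by
    apply my_markov n q μ hμ0 _ W (fun s => (Real.exp_pos _).le)
    intro s hs
    rw [Finset.mem_filter] at hs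
    apply Real.one_le_exp
    have : 0 ≤ (p - ε)*(q:ℝ) - X s := by linarith [hs.2]
    positivity
  have step2 : ∑ s : Fin q → Fin n, (∏ j, μ (s j)) * W s
      = Real.exp (2*ε*(p-ε)*(q:ℝ)) *
        (∑ i, μ i * (if i ∈ A then Real.exp (-(2*ε)) else 1))^q := by
    rw [← my_mgf n q μ A (-(2*ε)), Finset.mul_sum]
    apply Finset.sum_congr rfl
    intro s _
    rw [hWdef]
    simp only
    rw [show 2*ε*((p - ε)*(q:ℝ) - X s) = 2*ε*(p-ε)*(q:ℝ) + (-(2*ε)) * X s by ring,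
      Real.exp_add]
    ring
  have hbase : ∑ i, μ i * (if i ∈ A then Real.exp (-(2*ε)) else 1)
      = 1 - p + p * Real.exp (-(2*ε)) := by
    rw [← Finset.sum_filter_add_sum_filter_not Finset.univ (fun i => i ∈ A)]
    have hfA : Finset.univ.filter (fun i : Fin n => i ∈ A) = A := by
      ext i; simp
    have hsum1 : ∑ i ∈ Finset.univ.filter (fun i : Fin n => i ∈ A),
        μ i * (if i ∈ A then Real.exp (-(2*ε)) else 1) = p * Real.exp (-(2*ε)) := by
      rw [hfA, hpdef, Finset.sum_mul]
      apply Finset.sum_congr rfl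
      intro i hi
      rw [if_pos hi]
    have hsum2 : ∑ i ∈ Finset.univ.filter (fun i : Fin n => ¬ i ∈ A),
        μ i * (if i ∈ A then Real.exp (-(2*ε)) else 1) = 1 - p := by
      have : ∑ i ∈ Finset.univ.filter (fun i : Fin n => ¬ i ∈ A),
          μ i * (if i ∈ A then Real.exp (-(2*ε)) else 1)
          = ∑ i ∈ Finset.univ.filter (fun i : Fin n => ¬ i ∈ A), μ i := by
        apply Finset.sum_congr rfl
        intro i hi
        rw [Finset.mem_filter] at hi
        rw [if_neg hi.2, mul_one]
      rw [this]
      have hsplit := Finset.sum_filter_add_sum_filter_not Finset.univ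
        (fun i : Fin n => i ∈ A) μ
      rw [hfA, hμ1] at hsplit
      linarith
    rw [hsum1, hsum2]
    ring
  have hmgf : 1 - p + p * Real.exp (-(2*ε)) ≤ Real.exp (p * (-(2*ε)) + (-(2*ε))^2/4) :=
    mgf_bound p (-(2*ε)) hp0 hp1 (by linarith) (by linarith)
  have hbnn : 0 ≤ 1 - p + p * Real.exp (-(2*ε)) := by
    nlinarith [Real.exp_pos (-(2*ε)), mul_nonneg hp0 (Real.exp_pos (-(2*ε))).le]
  calc ∑ s ∈ Finset.univ.filter (fun s : Fin q → Fin n => X s ≤ (p - ε) * q), ∏ j, μ (s j)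
      ≤ Real.exp (2*ε*(p-ε)*(q:ℝ)) *
        (∑ i, μ i * (if i ∈ A then Real.exp (-(2*ε)) else 1))^q := by
        rw [← step2]; exact step1
    _ ≤ Real.exp (2*ε*(p-ε)*(q:ℝ)) * (Real.exp (p * (-(2*ε)) + (-(2*ε))^2/4))^q := by
        apply mul_le_mul_of_nonneg_left _ (Real.exp_pos _).le
        rw [hbase]
        exact pow_le_pow_left₀ hbnn hmgf q
    _ = Real.exp (-(ε^2) * q) := by
        rw [← Real.exp_nat_mul, ← Real.exp_add]
        congr 1
        ring

lemma chernoff_upper (n q : ℕ) (μ : Fin n → ℝ) (hμ0 : ∀ i, 0 ≤ μ i) (hμ1 : ∑ i, μ i = 1)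
    (i : Fin n) (m : ℝ) (hm : μ i ≤ m) :
    ∑ s ∈ Finset.univ.filter (fun s : Fin q → Fin n =>
        2*m*(q:ℝ) ≤ ((Finset.univ.filter (fun j => s j = i)).card : ℝ)),
      ∏ j, μ (s j) ≤ Real.exp ((1 - 2*Real.log 2) * (m*(q:ℝ))) := by
  classical
  set X : (Fin q → Fin n) → ℝ :=
    fun s => ((Finset.univ.filter (fun j => s j = i)).card : ℝ) with hXdef
  set W : (Fin q → Fin n) → ℝ :=
    fun s => Real.exp (Real.log 2 * (X s - 2*m*(q:ℝ))) with hWdef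
  have hlog2 : (0:ℝ) ≤ Real.log 2 := Real.log_nonneg one_le_two
  have step1 : ∑ s ∈ Finset.univ.filter (fun s : Fin q → Fin n => 2*m*(q:ℝ) ≤ X s),
      ∏ j, μ (s j) ≤ ∑ s : Fin q → Fin n, (∏ j, μ (s j)) * W s := by
    apply my_markov n q μ hμ0 _ W (fun s => (Real.exp_pos _).le)
    intro s hs
    rw [Finset.mem_filter] at hs
    apply Real.one_le_exp
    have : 0 ≤ X s - 2*m*(q:ℝ) := by linarith [hs.2]
    positivity
  have hXsingleton : ∀ s : Fin q → Fin n,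
      (Finset.univ.filter (fun j => s j ∈ ({i} : Finset (Fin n)))).card
        = (Finset.univ.filter (fun j => s j = i)).card := by
    intro s
    congr 1
    apply Finset.filter_congr
    intro j _
    simp
  have step2 : ∑ s : Fin q → Fin n, (∏ j, μ (s j)) * W s
      = Real.exp (-(Real.log 2) * (2*m*(q:ℝ))) *
        (∑ i', μ i' * (if i' ∈ ({i} : Finset (Fin n)) then Real.exp (Real.log 2) else 1))^q := by
    rw [← my_mgf n q μ ({i} : Finset (Fin n)) (Real.log 2), Finset.mul_sum]
    apply Finset.sum_congr rfl
    intro s _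
    rw [hWdef]
    simp only
    rw [hXsingleton s]
    rw [show Real.log 2 * (X s - 2*m*(q:ℝ))
        = -(Real.log 2) * (2*m*(q:ℝ)) + Real.log 2 * X s by ring, Real.exp_add]
    ring
  have hbase : ∑ i', μ i' * (if i' ∈ ({i} : Finset (Fin n)) then Real.exp (Real.log 2) else 1)
      = 1 + μ i := by
    rw [Real.exp_log (by norm_num : (0:ℝ) < 2)]
    rw [← Finset.sum_filter_add_sum_filter_not Finset.univ (fun i' => i' ∈ ({i} : Finset (Fin n)))]
    have hfA : Finset.univ.filter (fun i' : Fin n => i' ∈ ({i} : Finset (Fin n))) = {i} := by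
      ext i'; simp
    have h1 : ∑ i' ∈ Finset.univ.filter (fun i' : Fin n => i' ∈ ({i} : Finset (Fin n))),
        μ i' * (if i' ∈ ({i} : Finset (Fin n)) then (2:ℝ) else 1) = 2 * μ i := by
      rw [hfA]
      simp
      ring
    have h2 : ∑ i' ∈ Finset.univ.filter (fun i' : Fin n => ¬ i' ∈ ({i} : Finset (Fin n))),
        μ i' * (if i' ∈ ({i} : Finset (Fin n)) then (2:ℝ) else 1) = 1 - μ i := by
      have he : ∑ i' ∈ Finset.univ.filter (fun i' : Fin n => ¬ i' ∈ ({i} : Finset (Fin n))),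
          μ i' * (if i' ∈ ({i} : Finset (Fin n)) then (2:ℝ) else 1)
          = ∑ i' ∈ Finset.univ.filter (fun i' : Fin n => ¬ i' ∈ ({i} : Finset (Fin n))), μ i' := by
        apply Finset.sum_congr rfl
        intro i' hi'
        rw [Finset.mem_filter] at hi'
        rw [if_neg hi'.2, mul_one]
      rw [he]
      have hsplit := Finset.sum_filter_add_sum_filter_not Finset.univ
        (fun i' : Fin n => i' ∈ ({i} : Finset (Fin n))) μ
      rw [hfA, Finset.sum_singleton, hμ1] at hsplit
      linarith
    rw [h1, h2]
    ring
  have hμi0 : 0 ≤ μ i := hμ0 i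
  calc ∑ s ∈ Finset.univ.filter (fun s : Fin q → Fin n => 2*m*(q:ℝ) ≤ X s), ∏ j, μ (s j)
      ≤ Real.exp (-(Real.log 2) * (2*m*(q:ℝ))) *
        (∑ i', μ i' * (if i' ∈ ({i} : Finset (Fin n)) then Real.exp (Real.log 2) else 1))^q := by
        rw [← step2]; exact step1
    _ ≤ Real.exp (-(Real.log 2) * (2*m*(q:ℝ))) * (Real.exp (μ i))^q := by
        apply mul_le_mul_of_nonneg_left _ (Real.exp_pos _).le
        rw [hbase]
        apply pow_le_pow_left₀ (by linarith)
        linarith [Real.add_one_le_exp (μ i)]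
    _ ≤ Real.exp (-(Real.log 2) * (2*m*(q:ℝ))) * (Real.exp m)^q := by
        apply mul_le_mul_of_nonneg_left _ (Real.exp_pos _).le
        apply pow_le_pow_left₀ (Real.exp_pos _).le
        exact Real.exp_le_exp.2 hm
    _ = Real.exp ((1 - 2*Real.log 2) * (m*(q:ℝ))) := by
        rw [← Real.exp_nat_mul, ← Real.exp_add]
        congr 1
        ring

/- ## Numeric lemmas -/

lemma num3 : ∀ n : ℕ, 16 ≤ n → (n:ℝ) * (17/25)^n ≤ 1/18 := by
  intro n hn
  induction n with
  | zero => omega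
  | succ k ih =>
    rcases Nat.lt_or_ge k 16 with h | h
    · have hk : k = 15 := by omega
      subst hk
      norm_num
    · have hb := ih h
      have hpow : (0:ℝ) ≤ (17/25)^k := by positivity
      have hkR : (16:ℝ) ≤ (k:ℝ) := by exact_mod_cast h
      push_cast
      rw [pow_succ]
      nlinarith

lemma num1 (n : ℕ) (hn : 16 ≤ n) : (2:ℝ)^n * Real.exp (-(n:ℝ)) ≤ 1/18 := by
  have hexp : Real.exp (-(n:ℝ)) = (Real.exp (-1))^n := by
    rw [← Real.exp_nat_mul]
    congr 1
    ring
  have he1 : Real.exp (-1) ≤ 3/8 := by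
    rw [Real.exp_neg]
    rw [inv_le_comm₀ (Real.exp_pos 1) (by norm_num : (0:ℝ) < 3/8)]
    nlinarith [Real.exp_one_gt_d9]
  have h34 : (2:ℝ)^n * Real.exp (-(n:ℝ)) ≤ (3/4)^n := by
    rw [hexp, ← mul_pow]
    apply pow_le_pow_left₀ (by positivity)
    nlinarith [Real.exp_pos (-1)]
  calc (2:ℝ)^n * Real.exp (-(n:ℝ)) ≤ (3/4)^n := h34
    _ ≤ (3/4)^16 := pow_le_pow_of_le_one (by norm_num) (by norm_num) hn
    _ ≤ 1/18 := by norm_num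

lemma num2 (n : ℕ) (hn : 16 ≤ n) : (n:ℝ) * Real.exp ((1 - 2*Real.log 2) * (n:ℝ)) ≤ 1/18 := by
  have hexp : Real.exp ((1 - 2*Real.log 2) * (n:ℝ)) = (Real.exp (1 - 2*Real.log 2))^n := by
    rw [← Real.exp_nat_mul]
    congr 1
    ring
  have hval : Real.exp (1 - 2*Real.log 2) = Real.exp 1 / 4 := by
    rw [Real.exp_sub, show (2:ℝ)*Real.log 2 = Real.log 2 + Real.log 2 by ring, Real.exp_add,
      Real.exp_log (by norm_num : (0:ℝ) < 2)]
    norm_num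
  have hle : Real.exp (1 - 2*Real.log 2) ≤ 17/25 := by
    rw [hval]
    nlinarith [Real.exp_one_lt_d9]
  calc (n:ℝ) * Real.exp ((1 - 2*Real.log 2) * (n:ℝ))
      ≤ (n:ℝ) * (17/25)^n := by
        rw [hexp]
        apply mul_le_mul_of_nonneg_left _ (Nat.cast_nonneg n)
        apply pow_le_pow_left₀ (Real.exp_pos _).le hle
    _ ≤ 1/18 := num3 n hn

lemma my_sum_union_le {β : Type*} [DecidableEq β] (f : β → ℝ) (hf : ∀ x, 0 ≤ f x)
    (a b : Finset β) : ∑ x ∈ a ∪ b, f x ≤ ∑ x ∈ a, f x + ∑ x ∈ b, f x := by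
  have h1 := Finset.sum_union_inter (s₁ := a) (s₂ := b) (f := f)
  have h2 : 0 ≤ ∑ x ∈ a ∩ b, f x := Finset.sum_nonneg fun x _ => hf x
  linarith

/-- Learning a simple distribution: for n ≥ 16, ε ∈ (0,1) and q ≥ n/ε² i.i.d.
    samples from μ over {1,…,n}, with probability ≥ 8/9 the empirical
    distribution μ' satisfies d_TV(μ,μ') ≤ ε and μ'(i) ≤ 2·max{ε², μ(i)} for all i. -/
theorem learn_simple_distribution (n q : ℕ) (hn : 16 ≤ n)
    (ε : ℝ) (hε0 : 0 < ε) (hε1 : ε < 1)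
    (hq : (n : ℝ) / ε ^ 2 ≤ q)
    (μ : Fin n → ℝ) (hμ0 : ∀ i, 0 ≤ μ i) (hμ1 : ∑ i, μ i = 1) :
    (8/9 : ℝ) ≤ ∑ s ∈ Finset.univ.filter (fun s : Fin q → Fin n =>
        (1/2) * (∑ i, |μ i - ((Finset.univ.filter (fun j => s j = i)).card : ℝ) / q|) ≤ ε
        ∧ ∀ i, ((Finset.univ.filter (fun j => s j = i)).card : ℝ) / q
            ≤ 2 * max (ε ^ 2) (μ i)),
      ∏ j, μ (s j) := by
  classical
  have hε2pos : (0:ℝ) < ε^2 := by positivity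
  have hnpos : (0:ℝ) < (n:ℝ) := by
    have : 0 < n := by omega
    exact_mod_cast this
  have hqpos : (0:ℝ) < (q:ℝ) := lt_of_lt_of_le (div_pos hnpos hε2pos) hq
  have hqne : (q:ℝ) ≠ 0 := ne_of_gt hqpos
  have hεq : (n:ℝ) ≤ ε^2 * (q:ℝ) := by
    rw [div_le_iff₀ hε2pos] at hq
    linarith
  have hP0 : ∀ s : Fin q → Fin n, 0 ≤ ∏ j, μ (s j) :=
    fun s => Finset.prod_nonneg fun j _ => hμ0 _
  have hPsum : ∑ s : Fin q → Fin n, ∏ j, μ (s j) = 1 := by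
    rw [my_sum_prod_pow n q μ, hμ1, one_pow]
  -- the bad events
  set U1 : Finset (Fin q → Fin n) := (Finset.univ : Finset (Fin n)).powerset.biUnion
    (fun A => Finset.univ.filter (fun s : Fin q → Fin n =>
      ((Finset.univ.filter (fun j => s j ∈ A)).card : ℝ) ≤ ((∑ i ∈ A, μ i) - ε) * q)) with hU1def
  set U2 : Finset (Fin q → Fin n) := (Finset.univ : Finset (Fin n)).biUnion
    (fun i => Finset.univ.filter (fun s : Fin q → Fin n =>
      2 * max (ε^2) (μ i) * (q:ℝ) ≤ ((Finset.univ.filter (fun j => s j = i)).card : ℝ))) with hU2def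
  -- every sample sequence is good or lies in U1 ∪ U2
  have hcover : ∀ s : Fin q → Fin n,
      ¬ ((1/2) * (∑ i, |μ i - ((Finset.univ.filter (fun j => s j = i)).card : ℝ) / q|) ≤ ε
        ∧ ∀ i, ((Finset.univ.filter (fun j => s j = i)).card : ℝ) / q
            ≤ 2 * max (ε ^ 2) (μ i)) → s ∈ U1 ∪ U2 := by
    intro s hs
    rw [not_and_or] at hs
    set x : Fin n → ℝ := fun i => ((Finset.univ.filter (fun j => s j = i)).card : ℝ) with hxdef
    rcases hs with hA | hB
    · -- total variation failure
      push_neg at hA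
      set A : Finset (Fin n) := Finset.univ.filter (fun i => x i / q < μ i) with hAdef
      apply Finset.mem_union_left
      apply Finset.mem_biUnion.2
      refine ⟨A, Finset.mem_powerset.2 (Finset.subset_univ A),
        Finset.mem_filter.2 ⟨Finset.mem_univ _, ?_⟩⟩
      -- counting facts
      have hxsum : ∑ i, x i = (q:ℝ) := by
        have hc := Finset.card_eq_sum_card_fiberwise
          (s := (Finset.univ : Finset (Fin q))) (t := (Finset.univ : Finset (Fin n)))
          (f := s) (fun j _ => Finset.mem_univ _)
        rw [Finset.card_univ, Fintype.card_fin] at hc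
        rw [hxdef]
        beta_reduce
        exact_mod_cast hc.symm
      have hXA : ((Finset.univ.filter (fun j => s j ∈ A)).card : ℝ) = ∑ i ∈ A, x i := by
        have hc := Finset.card_eq_sum_card_fiberwise
          (s := Finset.univ.filter (fun j => s j ∈ A)) (t := A)
          (f := s) (fun j hj => (Finset.mem_filter.1 hj).2)
        have h2 : ∀ i ∈ A, ((Finset.univ.filter (fun j => s j ∈ A)).filter (fun j => s j = i))
            = Finset.univ.filter (fun j => s j = i) := by
          intro i hi
          rw [Finset.filter_filter]
          apply Finset.filter_congr
          intro j _
          constructor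
          · exact fun h => h.2
          · exact fun h => ⟨h ▸ hi, h⟩
        have h3 : ∀ i ∈ A, ((Finset.univ.filter (fun j => s j ∈ A)).filter (fun j => s j = i)).card
            = (Finset.univ.filter (fun j => s j = i)).card := fun i hi => by rw [h2 i hi]
        rw [Finset.sum_congr rfl h3] at hc
        rw [hxdef, hc]
        push_cast
        rfl
      have htotal : ∑ i, (μ i - x i / q) = 0 := by
        rw [Finset.sum_sub_distrib, hμ1, ← Finset.sum_div, hxsum, div_self hqne]
        ring
      have hsplitd := Finset.sum_filter_add_sum_filter_not Finset.univ
        (fun i => x i / q < μ i) (fun i => μ i - x i / q)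
      have habs := Finset.sum_filter_add_sum_filter_not Finset.univ
        (fun i => x i / q < μ i) (fun i => |μ i - x i / q|)
      have h1 : ∑ i ∈ A, |μ i - x i / q| = ∑ i ∈ A, (μ i - x i / q) := by
        apply Finset.sum_congr rfl
        intro i hi
        rw [hAdef] at hi
        exact abs_of_pos (by linarith [(Finset.mem_filter.1 hi).2])
      have h2 : ∑ i ∈ Finset.univ.filter (fun i => ¬ (x i / q < μ i)), |μ i - x i / q|
          = - ∑ i ∈ Finset.univ.filter (fun i => ¬ (x i / q < μ i)), (μ i - x i / q) := by
        rw [← Finset.sum_neg_distrib]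
        apply Finset.sum_congr rfl
        intro i hi
        have := (Finset.mem_filter.1 hi).2
        push_neg at this
        rw [abs_of_nonpos (by linarith)]
      have hAd : ε < ∑ i ∈ A, (μ i - x i / q) := by
        have habs' : ∑ i, |μ i - x i / q|
            = 2 * ∑ i ∈ A, (μ i - x i / q) := by
          rw [← habs, h1, h2, hAdef]
          have : ∑ i ∈ Finset.univ.filter (fun i => x i / q < μ i), (μ i - x i / q)
              + ∑ i ∈ Finset.univ.filter (fun i => ¬ (x i / q < μ i)), (μ i - x i / q) = 0 := by
            rw [hsplitd]; exact htotal
          linarith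
        rw [hxdef] at habs'
        linarith [hA]
      have hAd2 : (∑ i ∈ A, x i) / q < (∑ i ∈ A, μ i) - ε := by
        rw [Finset.sum_div]
        have : ∑ i ∈ A, (μ i - x i / q) = ∑ i ∈ A, μ i - ∑ i ∈ A, x i / q := by
          rw [Finset.sum_sub_distrib]
        linarith
      rw [hXA]
      have := (div_lt_iff₀ hqpos).1 hAd2
      linarith
    · -- empirical mass failure
      push_neg at hB
      obtain ⟨i, hi⟩ := hB
      apply Finset.mem_union_right
      apply Finset.mem_biUnion.2
      refine ⟨i, Finset.mem_univ _, Finset.mem_filter.2 ⟨Finset.mem_univ _, ?_⟩⟩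
      have := (lt_div_iff₀ hqpos).1 hi
      linarith
  -- bounds on the two bad sums
  have hU1bound : ∑ s ∈ U1, ∏ j, μ (s j) ≤ 1/18 := by
    calc ∑ s ∈ U1, ∏ j, μ (s j)
        ≤ ∑ A ∈ (Finset.univ : Finset (Fin n)).powerset,
            ∑ s ∈ Finset.univ.filter (fun s : Fin q → Fin n =>
              ((Finset.univ.filter (fun j => s j ∈ A)).card : ℝ) ≤ ((∑ i ∈ A, μ i) - ε) * q),
            ∏ j, μ (s j) := by
          rw [hU1def]
          exact my_sum_biUnion_le _ hP0 _ _
      _ ≤ ∑ A ∈ (Finset.univ : Finset (Fin n)).powerset, Real.exp (-(ε^2) * q) :=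
          Finset.sum_le_sum fun A _ => chernoff_lower n q μ hμ0 hμ1 ε hε0 hε1.le A
      _ = ((2:ℝ)^n) * Real.exp (-(ε^2) * q) := by
          rw [Finset.sum_const, nsmul_eq_mul, Finset.card_powerset, Finset.card_univ,
            Fintype.card_fin]
          push_cast
          ring
      _ ≤ (2:ℝ)^n * Real.exp (-(n:ℝ)) := by
          apply mul_le_mul_of_nonneg_left _ (by positivity)
          apply Real.exp_le_exp.2
          nlinarith
      _ ≤ 1/18 := num1 n hn
  have hU2bound : ∑ s ∈ U2, ∏ j, μ (s j) ≤ 1/18 := by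
    have hneg : 1 - 2*Real.log 2 ≤ 0 := by nlinarith [Real.log_two_gt_d9]
    calc ∑ s ∈ U2, ∏ j, μ (s j)
        ≤ ∑ i : Fin n, ∑ s ∈ Finset.univ.filter (fun s : Fin q → Fin n =>
              2 * max (ε^2) (μ i) * (q:ℝ) ≤ ((Finset.univ.filter (fun j => s j = i)).card : ℝ)),
            ∏ j, μ (s j) := by
          rw [hU2def]
          exact my_sum_biUnion_le _ hP0 _ _
      _ ≤ ∑ i : Fin n, Real.exp ((1 - 2*Real.log 2) * (max (ε^2) (μ i) * (q:ℝ))) :=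
          Finset.sum_le_sum fun i _ =>
            chernoff_upper n q μ hμ0 hμ1 i (max (ε^2) (μ i)) (le_max_right _ _)
      _ ≤ ∑ i : Fin n, Real.exp ((1 - 2*Real.log 2) * (n:ℝ)) := by
          apply Finset.sum_le_sum
          intro i _
          apply Real.exp_le_exp.2
          have hmq : (n:ℝ) ≤ max (ε^2) (μ i) * q :=
            le_trans hεq (mul_le_mul_of_nonneg_right (le_max_left _ _) hqpos.le)
          nlinarith
      _ = (n:ℝ) * Real.exp ((1 - 2*Real.log 2) * (n:ℝ)) := by
          rw [Finset.sum_const, nsmul_eq_mul, Finset.card_univ, Fintype.card_fin]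
      _ ≤ 1/18 := num2 n hn
  -- assemble
  have hsubset : (Finset.univ : Finset (Fin q → Fin n)) ⊆
      (Finset.univ.filter (fun s : Fin q → Fin n =>
        (1/2) * (∑ i, |μ i - ((Finset.univ.filter (fun j => s j = i)).card : ℝ) / q|) ≤ ε
        ∧ ∀ i, ((Finset.univ.filter (fun j => s j = i)).card : ℝ) / q
            ≤ 2 * max (ε ^ 2) (μ i))) ∪ (U1 ∪ U2) := by
    intro s _
    by_cases hPs : (1/2) * (∑ i, |μ i - ((Finset.univ.filter (fun j => s j = i)).card : ℝ) / q|) ≤ ε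
        ∧ ∀ i, ((Finset.univ.filter (fun j => s j = i)).card : ℝ) / q ≤ 2 * max (ε ^ 2) (μ i)
    · exact Finset.mem_union_left _ (Finset.mem_filter.2 ⟨Finset.mem_univ _, hPs⟩)
    · exact Finset.mem_union_right _ (hcover s hPs)
  have hchain : (1:ℝ) ≤ (∑ s ∈ Finset.univ.filter (fun s : Fin q → Fin n =>
        (1/2) * (∑ i, |μ i - ((Finset.univ.filter (fun j => s j = i)).card : ℝ) / q|) ≤ ε
        ∧ ∀ i, ((Finset.univ.filter (fun j => s j = i)).card : ℝ) / q
            ≤ 2 * max (ε ^ 2) (μ i)), ∏ j, μ (s j)) + (1/18 + 1/18) := by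
    have s1 : (1:ℝ) ≤ ∑ s ∈ (Finset.univ.filter (fun s : Fin q → Fin n =>
        (1/2) * (∑ i, |μ i - ((Finset.univ.filter (fun j => s j = i)).card : ℝ) / q|) ≤ ε
        ∧ ∀ i, ((Finset.univ.filter (fun j => s j = i)).card : ℝ) / q
            ≤ 2 * max (ε ^ 2) (μ i))) ∪ (U1 ∪ U2), ∏ j, μ (s j) := by
      have hmono := Finset.sum_le_sum_of_subset_of_nonneg hsubset fun s _ _ => hP0 s
      rw [hPsum] at hmono
      exact hmono
    have s2 := my_sum_union_le (fun s : Fin q → Fin n => ∏ j, μ (s j)) hP0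
      (Finset.univ.filter (fun s : Fin q → Fin n =>
        (1/2) * (∑ i, |μ i - ((Finset.univ.filter (fun j => s j = i)).card : ℝ) / q|) ≤ ε
        ∧ ∀ i, ((Finset.univ.filter (fun j => s j = i)).card : ℝ) / q
            ≤ 2 * max (ε ^ 2) (μ i))) (U1 ∪ U2)
    have s3 := my_sum_union_le (fun s : Fin q → Fin n => ∏ j, μ (s j)) hP0 U1 U2
    linarith
  linarith
end
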